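/- arXiv:2502.14794 — 3 statements merged into one kernel-verified Lean document; each statement's English description precedes it below -/
import Mathlib

section
/- Let ℱ be a finite family of graphs on [n], each with exactly f edges, let m ≤ N = C(n,2), and let t ∈ {0,…,f}. Let M(t) = |ℱ| · C(N−f, m−t) / C(N, m+f−t). Sample F uniformly from ℱ and W uniformly from the m-subsets of the edge set of K_n, independently. For δ > 0, the probability, conditioned on |F ∩ W| = t, that the number of F' ∈ ℱ with F' ⊆ F ∪ W is less than δ·M(t), is at most δ. -/
open scoped Classical

set_option maxHeartbeats 2000000 in
/-- Fragmentation counting lemma: let `ℱ` be a family of graphs on `[n]` (identified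
with their edge sets inside `K_n`), each with exactly `f` edges, let
`M(t) = |ℱ| C(N - f, m - t) / C(N, m + f - t)` with `N = C(n,2)`, and sample `(F, W)`
uniformly with `W` an `m`-subset of the edges of `K_n`. Conditionally on `|F ∩ W| = t`,
the probability that fewer than `δ M(t)` members `F' ∈ ℱ` satisfy `F' ⊆ F ∪ W` is at
most `δ`; equivalently, counting pairs, the number of bad pairs with `|F ∩ W| = t` is at
most `δ` times the number of pairs with `|F ∩ W| = t`. -/
theorem fragmentation_counting (n m f t : ℕ) (ht : t ≤ f)
    (ℱ : Finset (Finset (Sym2 (Fin n))))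
    (hℱ : ∀ F ∈ ℱ, F.card = f ∧ ∀ e ∈ F, ¬ e.IsDiag)
    (δ : ℝ) (hδ : 0 < δ) :
    let 𝒲 : Finset (Finset (Sym2 (Fin n))) :=
      Finset.univ.filter (fun W => W.card = m ∧ ∀ e ∈ W, ¬ e.IsDiag);
    let M : ℝ := (ℱ.card : ℝ) * ((n.choose 2 - f).choose (m - t) : ℝ) /
      ((n.choose 2).choose (m + f - t) : ℝ);
    (((ℱ ×ˢ 𝒲).filter (fun FW => (FW.1 ∩ FW.2).card = t ∧
        ((ℱ.filter (fun F' => F' ⊆ FW.1 ∪ FW.2)).card : ℝ) < δ * M)).card : ℝ)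
      ≤ δ * (((ℱ ×ˢ 𝒲).filter (fun FW => (FW.1 ∩ FW.2).card = t)).card : ℝ) := by
  intro 𝒲 M
  classical
  set N := n.choose 2 with hN
  set E : Finset (Sym2 (Fin n)) := Finset.univ.filter (fun e => ¬ e.IsDiag) with hEdef
  have hEcard : E.card = N := by
    rw [hEdef, hN, ← Fintype.card_subtype, Sym2.card_subtype_not_diag, Fintype.card_fin]
  set T := (ℱ ×ˢ 𝒲).filter (fun FW => (FW.1 ∩ FW.2).card = t) with hTdef
  set B := (ℱ ×ˢ 𝒲).filter (fun FW => (FW.1 ∩ FW.2).card = t ∧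
        ((ℱ.filter (fun F' => F' ⊆ FW.1 ∪ FW.2)).card : ℝ) < δ * M) with hBdef
  show (B.card : ℝ) ≤ δ * (T.card : ℝ)
  have hTnonneg : (0:ℝ) ≤ δ * (T.card : ℝ) := by positivity
  have hWmem : ∀ W ∈ 𝒲, W ⊆ E ∧ W.card = m := by
    intro W hW
    rw [Finset.mem_filter] at hW
    refine ⟨fun e he => ?_, hW.2.1⟩
    rw [hEdef, Finset.mem_filter]
    exact ⟨Finset.mem_univ _, hW.2.2 e he⟩
  have hFmem : ∀ F ∈ ℱ, F ⊆ E ∧ F.card = f := by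
    intro F hF
    refine ⟨fun e he => ?_, (hℱ F hF).1⟩
    rw [hEdef, Finset.mem_filter]
    exact ⟨Finset.mem_univ _, (hℱ F hF).2 e he⟩
  have hMdef : M = (ℱ.card : ℝ) * (((N - f).choose (m - t) : ℕ) : ℝ) /
      ((N.choose (m + f - t) : ℕ) : ℝ) := rfl
  -- degenerate case: δ * M ≤ 0
  by_cases hMpos : 0 < δ * M
  swap
  · push_neg at hMpos
    have hBempty : B = ∅ := by
      rw [Finset.eq_empty_iff_forall_notMem]
      intro p hp
      rw [hBdef, Finset.mem_filter] at hp
      have h1 := hp.2.2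
      have h0 : (0:ℝ) ≤ ((ℱ.filter (fun F' => F' ⊆ p.1 ∪ p.2)).card : ℝ) := Nat.cast_nonneg _
      linarith
    rw [hBempty]; simpa using hTnonneg
  -- degenerate case: t > m
  by_cases htm : t ≤ m
  swap
  · push_neg at htm
    have hBempty : B = ∅ := by
      rw [Finset.eq_empty_iff_forall_notMem]
      intro p hp
      rw [hBdef, Finset.mem_filter, Finset.mem_product] at hp
      have hW := (hWmem p.2 hp.1.2).2
      have hle : (p.1 ∩ p.2).card ≤ p.2.card := Finset.card_le_card Finset.inter_subset_right
      have hcard := hp.2.1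
      omega
    rw [hBempty]; simpa using hTnonneg
  -- main case
  have hM0 : 0 < M := by nlinarith
  have hden : ((N.choose (m + f - t) : ℕ) : ℝ) ≠ 0 := by
    intro h
    have : M = 0 := by rw [hMdef, h, div_zero]
    linarith
  -- Step 1: bound B.card by fibering over A = F ∪ W
  set 𝒜 := E.powersetCard (m + f - t) with h𝒜
  have hmap : ∀ p ∈ B, p.1 ∪ p.2 ∈ 𝒜 := by
    intro p hp
    rw [hBdef, Finset.mem_filter, Finset.mem_product] at hp
    obtain ⟨⟨hpF, hpW⟩, hpt, _⟩ := hp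
    rw [h𝒜, Finset.mem_powersetCard]
    constructor
    · exact Finset.union_subset (hFmem p.1 hpF).1 (hWmem p.2 hpW).1
    · have h1 := Finset.card_union_add_card_inter p.1 p.2
      have h2 := (hFmem p.1 hpF).2
      have h3 := (hWmem p.2 hpW).2
      omega
  have hBsum : B.card = ∑ A ∈ 𝒜, (B.filter (fun p => p.1 ∪ p.2 = A)).card :=
    Finset.card_eq_sum_card_fiberwise hmap
  have hAle : ∀ A ∈ 𝒜, ((B.filter (fun p => p.1 ∪ p.2 = A)).card : ℝ)
      ≤ δ * M * (f.choose t : ℝ) := by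
    intro A hA
    rcases (B.filter (fun p => p.1 ∪ p.2 = A)).eq_empty_or_nonempty with h | ⟨p0, hp0⟩
    · rw [h]
      simp only [Finset.card_empty, Nat.cast_zero]
      positivity
    · have hp0' := hp0
      rw [Finset.mem_filter] at hp0'
      obtain ⟨hp0B, hp0A⟩ := hp0'
      rw [hBdef, Finset.mem_filter] at hp0B
      have hbad : ((ℱ.filter (fun F' => F' ⊆ A)).card : ℝ) < δ * M := by
        have h2 := hp0B.2.2
        rwa [hp0A] at h2
      have hnat : (B.filter (fun p => p.1 ∪ p.2 = A)).card
          ≤ (ℱ.filter (fun F' => F' ⊆ A)).card * f.choose t := by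
        have hmap2 : ∀ p ∈ B.filter (fun p => p.1 ∪ p.2 = A),
            p.1 ∈ ℱ.filter (fun F' => F' ⊆ A) := by
          intro p hp
          rw [Finset.mem_filter] at hp
          obtain ⟨hpB, hpA⟩ := hp
          rw [hBdef, Finset.mem_filter, Finset.mem_product] at hpB
          rw [Finset.mem_filter]
          exact ⟨hpB.1.1, hpA ▸ Finset.subset_union_left⟩
        rw [Finset.card_eq_sum_card_fiberwise hmap2]
        refine le_trans (Finset.sum_le_card_nsmul _ _ (f.choose t) ?_) (by rw [smul_eq_mul])
        intro F hF
        rw [Finset.mem_filter] at hF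
        have hFcard : F.card = f := (hℱ F hF.1).1
        have hkey : ∀ p, p ∈ (B.filter (fun p => p.1 ∪ p.2 = A)).filter (fun p => p.1 = F) →
            p.1 = F ∧ p.2 = (A \ F) ∪ (F ∩ p.2) ∧ (F ∩ p.2).card = t := by
          intro p hp
          simp only [Finset.mem_filter] at hp
          obtain ⟨⟨hpB, hpA⟩, hpF⟩ := hp
          rw [hBdef, Finset.mem_filter] at hpB
          refine ⟨hpF, ?_, ?_⟩
          · have h1 : A \ F = p.2 \ F := by
              rw [← hpA, hpF, Finset.union_sdiff_left]
            rw [h1, Finset.inter_comm, Finset.sdiff_union_inter]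
          · rw [← hpF]
            exact hpB.2.1
        calc ((B.filter (fun p => p.1 ∪ p.2 = A)).filter (fun p => p.1 = F)).card
            ≤ (F.powersetCard t).card := by
              apply Finset.card_le_card_of_injOn (fun p => F ∩ p.2)
              · intro p hp
                obtain ⟨hpF, _, hpt⟩ := hkey p hp
                rw [Finset.mem_coe, Finset.mem_powersetCard]
                exact ⟨Finset.inter_subset_left, hpt⟩
              · intro p hp q hq hpq
                obtain ⟨hpF, hp2, _⟩ := hkey p hp
                obtain ⟨hqF, hq2, _⟩ := hkey q hq
                simp only at hpq
                have : p.2 = q.2 := by rw [hp2, hq2, hpq]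
                exact Prod.ext (hpF.trans hqF.symm) this
          _ = f.choose t := by rw [Finset.card_powersetCard, hFcard]
      calc ((B.filter (fun p => p.1 ∪ p.2 = A)).card : ℝ)
          ≤ ((ℱ.filter (fun F' => F' ⊆ A)).card : ℝ) * (f.choose t : ℝ) := by
            exact_mod_cast Nat.cast_le.mpr hnat
        _ ≤ δ * M * (f.choose t : ℝ) :=
            mul_le_mul_of_nonneg_right hbad.le (Nat.cast_nonneg _)
  have hstep1 : (B.card : ℝ) ≤ (N.choose (m + f - t) : ℝ) * (δ * M * (f.choose t : ℝ)) := by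
    rw [hBsum]
    push_cast
    calc (∑ A ∈ 𝒜, ((B.filter (fun p => p.1 ∪ p.2 = A)).card : ℝ))
        ≤ ∑ _A ∈ 𝒜, δ * M * (f.choose t : ℝ) := Finset.sum_le_sum hAle
      _ = (𝒜.card : ℝ) * (δ * M * (f.choose t : ℝ)) := by
          rw [Finset.sum_const, nsmul_eq_mul]
      _ = (N.choose (m + f - t) : ℝ) * (δ * M * (f.choose t : ℝ)) := by
          rw [h𝒜, Finset.card_powersetCard, hEcard]
  have hid : (N.choose (m + f - t) : ℝ) * (δ * M * (f.choose t : ℝ))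
      = δ * ((ℱ.card : ℝ) * ((N - f).choose (m - t) : ℝ) * (f.choose t : ℝ)) := by
    rw [hMdef]
    field_simp
  -- Step 3: lower bound for T.card
  have hstep3 : ℱ.card * ((N - f).choose (m - t)) * (f.choose t) ≤ T.card := by
    have hmapT : ∀ p ∈ T, p.1 ∈ ℱ := by
      intro p hp
      rw [hTdef, Finset.mem_filter, Finset.mem_product] at hp
      exact hp.1.1
    rw [Finset.card_eq_sum_card_fiberwise hmapT]
    have hlow : ∀ F ∈ ℱ, ((N - f).choose (m - t)) * (f.choose t)
        ≤ (T.filter (fun p => p.1 = F)).card := by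
      intro F hF
      obtain ⟨hFE, hFcard⟩ := hFmem F hF
      have hsd : (E \ F).card = N - f := by rw [Finset.card_sdiff, Finset.inter_eq_left.mpr hFE, hEcard, hFcard]
      have hdisj : ∀ S ∈ F.powersetCard t, ∀ T' ∈ (E \ F).powersetCard (m - t),
          S ⊆ F ∧ T' ⊆ E \ F ∧ S.card = t ∧ T'.card = m - t ∧ Disjoint F T' := by
        intro S hS T' hT'
        rw [Finset.mem_powersetCard] at hS hT'
        refine ⟨hS.1, hT'.1, hS.2, hT'.2, ?_⟩
        rw [Finset.disjoint_right]
        intro a haT'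
        exact (Finset.mem_sdiff.mp (hT'.1 haT')).2
      have hinter : ∀ S ∈ F.powersetCard t, ∀ T' ∈ (E \ F).powersetCard (m - t),
          F ∩ (S ∪ T') = S := by
        intro S hS T' hT'
        obtain ⟨hSF, hTE, hSc, hTc, hdis⟩ := hdisj S hS T' hT'
        rw [Finset.inter_union_distrib_left, Finset.inter_eq_right.mpr hSF,
          Finset.disjoint_iff_inter_eq_empty.mp hdis, Finset.union_empty]
      have hle := Finset.card_le_card_of_injOn
        (f := fun q : Finset (Sym2 (Fin n)) × Finset (Sym2 (Fin n)) => ((F, q.1 ∪ q.2) :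
          Finset (Sym2 (Fin n)) × Finset (Sym2 (Fin n))))
        (s := (F.powersetCard t) ×ˢ ((E \ F).powersetCard (m - t)))
        (t := T.filter (fun p => p.1 = F)) ?_ ?_
      · calc ((N - f).choose (m - t)) * (f.choose t)
            = ((F.powersetCard t) ×ˢ ((E \ F).powersetCard (m - t))).card := by
              rw [Finset.card_product, Finset.card_powersetCard, Finset.card_powersetCard,
                hFcard, hsd]
              ring
          _ ≤ _ := hle
      · intro q hq
        rw [Finset.mem_coe, Finset.mem_product] at hq
        obtain ⟨hSF, hTE, hSc, hTc, hdis⟩ := hdisj q.1 hq.1 q.2 hq.2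
        have hdisST : Disjoint q.1 q.2 := Finset.disjoint_of_subset_left hSF hdis
        have hcardU : (q.1 ∪ q.2).card = m := by
          rw [Finset.card_union_of_disjoint hdisST, hSc, hTc]
          omega
        rw [Finset.mem_coe, Finset.mem_filter, hTdef, Finset.mem_filter, Finset.mem_product]
        refine ⟨⟨⟨hF, ?_⟩, ?_⟩, rfl⟩
        · rw [Finset.mem_filter]
          refine ⟨Finset.mem_univ _, hcardU, fun e he => ?_⟩
          have heE : e ∈ E := by
            rcases Finset.mem_union.mp he with h | h
            · exact hFE (hSF h)
            · exact (Finset.mem_sdiff.mp (hTE h)).1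
          rw [hEdef, Finset.mem_filter] at heE
          exact heE.2
        · show (F ∩ (q.1 ∪ q.2)).card = t
          rw [hinter q.1 hq.1 q.2 hq.2, hSc]
      · intro q hq q' hq' hqq
        simp only [Finset.mem_coe, Finset.mem_product] at hq hq'
        have hU : q.1 ∪ q.2 = q'.1 ∪ q'.2 := congrArg Prod.snd hqq
        have h1 : q.1 = q'.1 := by
          have e1 := hinter q.1 hq.1 q.2 hq.2
          have e2 := hinter q'.1 hq'.1 q'.2 hq'.2
          rw [← e1, ← e2, hU]
        have h2 : q.2 = q'.2 := by
          obtain ⟨hSF, hTE, _, _, hdis⟩ := hdisj q.1 hq.1 q.2 hq.2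
          obtain ⟨hSF', hTE', _, _, hdis'⟩ := hdisj q'.1 hq'.1 q'.2 hq'.2
          have e1 : (q.1 ∪ q.2) \ F = q.2 := by
            rw [Finset.union_sdiff_distrib, Finset.sdiff_eq_empty_iff_subset.mpr hSF,
              Finset.empty_union, Finset.sdiff_eq_self_iff_disjoint.mpr hdis.symm]
          have e2 : (q'.1 ∪ q'.2) \ F = q'.2 := by
            rw [Finset.union_sdiff_distrib, Finset.sdiff_eq_empty_iff_subset.mpr hSF',
              Finset.empty_union, Finset.sdiff_eq_self_iff_disjoint.mpr hdis'.symm]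
          rw [← e1, ← e2, hU]
        exact Prod.ext h1 h2
    calc ℱ.card * ((N - f).choose (m - t)) * (f.choose t)
        = ∑ _F ∈ ℱ, ((N - f).choose (m - t)) * (f.choose t) := by
          rw [Finset.sum_const, smul_eq_mul]; ring
      _ ≤ ∑ F ∈ ℱ, (T.filter (fun p => p.1 = F)).card := Finset.sum_le_sum hlow
  calc (B.card : ℝ)
      ≤ (N.choose (m + f - t) : ℝ) * (δ * M * (f.choose t : ℝ)) := hstep1
    _ = δ * ((ℱ.card : ℝ) * ((N - f).choose (m - t) : ℝ) * (f.choose t : ℝ)) := hid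
    _ ≤ δ * (T.card : ℝ) := by
        apply mul_le_mul_of_nonneg_left _ hδ.le
        exact_mod_cast hstep3
end

section
/- Let d ≥ 4 and let G be a random d-regular graph on [n]. Then with high probability, for every fixed graph H with at least (d|V(H)| − d)/2 edges and |V(H)| ≥ 3, G contains no subgraph isomorphic to H; consequently, with high probability every subgraph G̃ ⊆ G with 3 ≤ |V(G̃)| bounded has edge boundary |∂_e(G̃)| ≥ d+1. -/
open SimpleGraph Filter

/-- The edge boundary of a subgraph `H` of `G`. -/
def edgeBoundary {V : Type*} (G : SimpleGraph V) (H : G.Subgraph) : Set (Sym2 V) :=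
  {e | ∃ u v, e = s(u, v) ∧ G.Adj u v ∧ u ∈ H.verts ∧ v ∉ H.verts}

/-- `G` is `d`-regular. -/
def IsRegularGraph {V : Type*} (G : SimpleGraph V) (d : ℕ) : Prop :=
  ∀ v, (G.neighborSet v).ncard = d

open Finset Function

variable {n : ℕ}

/-- Switch edges ab, xy for ax, by. -/
noncomputable def switchG (G : SimpleGraph (Fin n)) (a b x y : Fin n) : SimpleGraph (Fin n) :=
  SimpleGraph.fromEdgeSet ((G.edgeSet \ {s(a,b), s(x,y)}) ∪ {s(a,x), s(b,y)})

section
variable {G : SimpleGraph (Fin n)} {a b x y : Fin n}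
variable (hab : G.Adj a b) (hxy : G.Adj x y) (hxa : x ≠ a) (hxb : x ≠ b)
  (hya : y ≠ a) (hyb : y ≠ b) (hax : ¬ G.Adj a x) (hby : ¬ G.Adj b y)

include hab hxy hxa hxb hya hyb hax hby

lemma switch_adj {u v : Fin n} : (switchG G a b x y).Adj u v ↔
    ((G.Adj u v ∧ s(u,v) ≠ s(a,b) ∧ s(u,v) ≠ s(x,y)) ∨ s(u,v) = s(a,x) ∨ s(u,v) = s(b,y)) := by
  have hax' : a ≠ x := fun h => hxa h.symm
  have hby' : b ≠ y := fun h => hyb h.symm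
  constructor
  · rintro h
    rw [switchG, fromEdgeSet_adj] at h
    obtain ⟨(⟨he, hne⟩ | he), huv⟩ := h
    · exact Or.inl ⟨he, by simpa using hne⟩
    · simp only [Set.mem_insert_iff, Set.mem_singleton_iff] at he
      tauto
  · rintro (⟨he, h1, h2⟩ | h | h)
    · rw [switchG, fromEdgeSet_adj]
      exact ⟨Or.inl ⟨he, by simp [h1, h2]⟩, he.ne⟩
    · rw [switchG, fromEdgeSet_adj]
      refine ⟨Or.inr (by simp [h]), ?_⟩
      intro huv
      rw [huv, Sym2.eq_iff] at h
      first | tauto | (simp_all; rcases h with ⟨rfl, h2⟩ | ⟨rfl, h2⟩ <;> simp_all)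
    · rw [switchG, fromEdgeSet_adj]
      refine ⟨Or.inr (by simp [h]), ?_⟩
      intro huv
      rw [huv, Sym2.eq_iff] at h
      first | tauto | (simp_all; rcases h with ⟨rfl, h2⟩ | ⟨rfl, h2⟩ <;> simp_all)

lemma switch_nbr_generic {u : Fin n} (hu1 : u ≠ a) (hu2 : u ≠ b) (hu3 : u ≠ x) (hu4 : u ≠ y) :
    (switchG G a b x y).neighborSet u = G.neighborSet u := by
  ext v
  simp only [mem_neighborSet, switch_adj hab hxy hxa hxb hya hyb hax hby, Sym2.eq_iff]
  constructor
  · intro h; tauto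
  · intro h
    have hv1 : v ≠ u := fun e => (h.ne (e ▸ rfl)).elim
    refine Or.inl ⟨h, ?_, ?_⟩ <;> intro he <;> rw [Sym2.eq_iff] at he <;> tauto

lemma switch_nbr_a : (switchG G a b x y).neighborSet a = insert x (G.neighborSet a \ {b}) := by
  ext v
  simp only [mem_neighborSet, switch_adj hab hxy hxa hxb hya hyb hax hby,
    Set.mem_insert_iff, Set.mem_diff, Set.mem_singleton_iff]
  constructor
  · rintro (⟨h, h1, h2⟩ | h | h)
    · exact Or.inr ⟨h, fun e => h1 (by rw [e])⟩
    · rw [Sym2.eq_iff] at h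
      rcases h with ⟨-, h⟩ | ⟨h, -⟩
      · exact Or.inl h
      · exact absurd h.symm hxa
    · rw [Sym2.eq_iff] at h
      rcases h with ⟨h, -⟩ | ⟨h, -⟩
      · exact absurd h hab.ne
      · exact absurd h.symm hya
  · rintro (rfl | ⟨h, hvb⟩)
    · exact Or.inr (Or.inl rfl)
    · refine Or.inl ⟨h, fun he => ?_, fun he => ?_⟩ <;> rw [Sym2.eq_iff] at he
      · rcases he with ⟨-, h2⟩ | ⟨h2, -⟩
        · exact hvb h2
        · exact hab.ne h2
      · rcases he with ⟨h2, -⟩ | ⟨h2, -⟩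
        · exact hxa h2.symm
        · exact hya h2.symm

lemma switch_nbr_b : (switchG G a b x y).neighborSet b = insert y (G.neighborSet b \ {a}) := by
  ext v
  simp only [mem_neighborSet, switch_adj hab hxy hxa hxb hya hyb hax hby,
    Set.mem_insert_iff, Set.mem_diff, Set.mem_singleton_iff]
  constructor
  · rintro (⟨h, h1, h2⟩ | h | h)
    · exact Or.inr ⟨h, fun e => h1 (by rw [e]; exact Sym2.eq_swap)⟩
    · rw [Sym2.eq_iff] at h
      rcases h with ⟨h, -⟩ | ⟨h, -⟩
      · exact absurd h.symm hab.ne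
      · exact absurd h.symm hxb
    · rw [Sym2.eq_iff] at h
      rcases h with ⟨-, h⟩ | ⟨h, -⟩
      · exact Or.inl h
      · exact absurd h.symm hyb
  · rintro (rfl | ⟨h, hva⟩)
    · exact Or.inr (Or.inr rfl)
    · refine Or.inl ⟨h, fun he => ?_, fun he => ?_⟩ <;> rw [Sym2.eq_iff] at he
      · rcases he with ⟨h2, -⟩ | ⟨-, h2⟩
        · exact hab.ne h2.symm
        · exact hva h2
      · rcases he with ⟨h2, -⟩ | ⟨h2, -⟩
        · exact hxb h2.symm
        · exact hyb h2.symm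

lemma switch_nbr_x : (switchG G a b x y).neighborSet x = insert a (G.neighborSet x \ {y}) := by
  ext v
  simp only [mem_neighborSet, switch_adj hab hxy hxa hxb hya hyb hax hby,
    Set.mem_insert_iff, Set.mem_diff, Set.mem_singleton_iff]
  constructor
  · rintro (⟨h, h1, h2⟩ | h | h)
    · exact Or.inr ⟨h, fun e => h2 (by rw [e])⟩
    · rw [Sym2.eq_iff] at h
      rcases h with ⟨h2, -⟩ | ⟨-, h2⟩
      · exact absurd h2 hxa
      · exact Or.inl h2
    · rw [Sym2.eq_iff] at h
      rcases h with ⟨h2, -⟩ | ⟨h2, -⟩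
      · exact absurd h2 hxb
      · exact absurd h2 hxy.ne
  · rintro (rfl | ⟨h, hvy⟩)
    · exact Or.inr (Or.inl Sym2.eq_swap)
    · refine Or.inl ⟨h, fun he => ?_, fun he => ?_⟩ <;> rw [Sym2.eq_iff] at he
      · rcases he with ⟨h2, -⟩ | ⟨h2, -⟩
        · exact hxa h2
        · exact hxb h2
      · rcases he with ⟨-, h2⟩ | ⟨h2, -⟩
        · exact hvy h2
        · exact hxy.ne h2

lemma switch_nbr_y : (switchG G a b x y).neighborSet y = insert b (G.neighborSet y \ {x}) := by
  ext v
  simp only [mem_neighborSet, switch_adj hab hxy hxa hxb hya hyb hax hby,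
    Set.mem_insert_iff, Set.mem_diff, Set.mem_singleton_iff]
  constructor
  · rintro (⟨h, h1, h2⟩ | h | h)
    · exact Or.inr ⟨h, fun e => h2 (by rw [e]; exact Sym2.eq_swap)⟩
    · rw [Sym2.eq_iff] at h
      rcases h with ⟨h2, -⟩ | ⟨h2, -⟩
      · exact absurd h2 hya
      · exact absurd h2.symm hxy.ne
    · rw [Sym2.eq_iff] at h
      rcases h with ⟨h2, -⟩ | ⟨-, h2⟩
      · exact absurd h2 hyb
      · exact Or.inl h2
  · rintro (rfl | ⟨h, hvx⟩)
    · exact Or.inr (Or.inr Sym2.eq_swap)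
    · refine Or.inl ⟨h, fun he => ?_, fun he => ?_⟩ <;> rw [Sym2.eq_iff] at he
      · rcases he with ⟨h2, -⟩ | ⟨h2, -⟩
        · exact hya h2
        · exact hyb h2
      · rcases he with ⟨h2, -⟩ | ⟨-, h2⟩
        · exact hxy.ne h2.symm
        · exact hvx h2

lemma switch_regular {d : ℕ} (hreg : ∀ v, ((G.neighborSet v).ncard = d)) :
    ∀ v, (((switchG G a b x y).neighborSet v).ncard = d) := by
  intro u
  have hd1 : 1 ≤ d := by
    have h := hreg a
    have : (G.neighborSet a).ncard ≠ 0 := by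
      intro h0
      rw [Set.ncard_eq_zero (Set.toFinite _)] at h0
      exact absurd (h0 ▸ hab : b ∈ (∅ : Set (Fin n))) (Set.notMem_empty b)
    omega
  by_cases h1 : u = a
  · rw [h1]
    have hmem : b ∈ G.neighborSet a := hab
    have hnot : x ∉ G.neighborSet a \ {b} := fun hc => hax hc.1
    rw [switch_nbr_a hab hxy hxa hxb hya hyb hax hby,
      Set.ncard_insert_of_notMem hnot (Set.toFinite _),
      Set.ncard_diff_singleton_of_mem hmem, hreg a]
    omega
  by_cases h2 : u = b
  · rw [h2]
    have hmem : a ∈ G.neighborSet b := hab.symm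
    have hnot : y ∉ G.neighborSet b \ {a} := fun hc => hby hc.1
    rw [switch_nbr_b hab hxy hxa hxb hya hyb hax hby,
      Set.ncard_insert_of_notMem hnot (Set.toFinite _),
      Set.ncard_diff_singleton_of_mem hmem, hreg b]
    omega
  by_cases h3 : u = x
  · rw [h3]
    have hmem : y ∈ G.neighborSet x := hxy
    have hnot : a ∉ G.neighborSet x \ {y} := fun hc => hax hc.1.symm
    rw [switch_nbr_x hab hxy hxa hxb hya hyb hax hby,
      Set.ncard_insert_of_notMem hnot (Set.toFinite _),
      Set.ncard_diff_singleton_of_mem hmem, hreg x]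
    omega
  by_cases h4 : u = y
  · rw [h4]
    have hmem : x ∈ G.neighborSet y := hxy.symm
    have hnot : b ∉ G.neighborSet y \ {x} := fun hc => hby hc.1.symm
    rw [switch_nbr_y hab hxy hxa hxb hya hyb hax hby,
      Set.ncard_insert_of_notMem hnot (Set.toFinite _),
      Set.ncard_diff_singleton_of_mem hmem, hreg y]
    omega
  · rw [switch_nbr_generic hab hxy hxa hxb hya hyb hax hby h1 h2 h3 h4]
    exact hreg u

lemma switch_edgeSet :
    (switchG G a b x y).edgeSet = (G.edgeSet \ {s(a,b), s(x,y)}) ∪ {s(a,x), s(b,y)} := by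
  rw [switchG, edgeSet_fromEdgeSet]
  ext e
  simp only [Set.mem_diff, Set.mem_setOf_eq, Set.mem_union, Set.mem_insert_iff,
    Set.mem_singleton_iff]
  constructor
  · rintro ⟨he, -⟩; exact he
  · intro he
    refine ⟨he, ?_⟩
    intro hdiag
    rcases he with ⟨he, -⟩ | he
    · exact (G.not_isDiag_of_mem_edgeSet he) hdiag
    · rcases he with he | he <;> subst he <;> rw [Sym2.mem_diagSet, Sym2.mk_isDiag_iff] at hdiag
      · exact hxa hdiag.symm
      · exact hyb hdiag.symm

lemma switch_recover :
    G.edgeSet = ((switchG G a b x y).edgeSet \ {s(a,x), s(b,y)}) ∪ {s(a,b), s(x,y)} := by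
  have e1 : s(a,b) ∈ G.edgeSet := hab
  have e2 : s(x,y) ∈ G.edgeSet := hxy
  have e3 : s(a,x) ∉ G.edgeSet := hax
  have e4 : s(b,y) ∉ G.edgeSet := hby
  rw [switch_edgeSet hab hxy hxa hxb hya hyb hax hby]
  ext e
  simp only [Set.mem_union, Set.mem_diff, Set.mem_insert_iff, Set.mem_singleton_iff]
  constructor
  · intro he
    by_cases hd : e = s(a,b) ∨ e = s(x,y)
    · exact Or.inr hd
    · push_neg at hd
      refine Or.inl ⟨Or.inl ⟨he, ?_⟩, ?_⟩
      · tauto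
      · rintro (rfl | rfl)
        · exact e3 he
        · exact e4 he
  · rintro (⟨he', hn⟩ | he | he)
    · rcases he' with ⟨he, -⟩ | he
      · exact he
      · exact absurd he hn
    · rw [he]; exact e1
    · rw [he]; exact e2

end

section counting
variable {n d : ℕ}

lemma reg_nbr_card {G : SimpleGraph (Fin n)} [DecidableRel G.Adj]
    (h : ∀ v, (G.neighborSet v).ncard = d) (v : Fin n) : (G.neighborFinset v).card = d := by
  rw [← h v, SimpleGraph.neighborFinset_def, ← Set.ncard_eq_toFinset_card']

open Classical in
noncomputable def regSet (n d : ℕ) : Finset (SimpleGraph (Fin n)) :=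
  Finset.univ.filter (fun G => ∀ v, (G.neighborSet v).ncard = d)

open Classical in
noncomputable def ASet (n d : ℕ) (F : Finset (Sym2 (Fin n))) : Finset (SimpleGraph (Fin n)) :=
  Finset.univ.filter (fun G => (∀ v, (G.neighborSet v).ncard = d) ∧ ↑F ⊆ G.edgeSet)

open Classical in
noncomputable def pairSet (G : SimpleGraph (Fin n)) (a b : Fin n) (F : Finset (Sym2 (Fin n))) :
    Finset (Fin n × Fin n) :=
  Finset.univ.filter (fun p => G.Adj p.1 p.2 ∧ p.1 ≠ a ∧ p.1 ≠ b ∧ p.2 ≠ a ∧ p.2 ≠ b ∧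
    ¬G.Adj a p.1 ∧ ¬G.Adj b p.2 ∧ s(p.1, p.2) ∉ F)

open Classical in
lemma adj_pairs_card (G : SimpleGraph (Fin n)) (hreg : ∀ v, (G.neighborSet v).ncard = d) :
    (Finset.univ.filter (fun p : Fin n × Fin n => G.Adj p.1 p.2)).card = d * n := by
  classical
  rw [Finset.card_eq_sum_card_fiberwise (f := Prod.fst) (t := Finset.univ)
    (fun x _ => Finset.mem_univ _)]
  have hfib : ∀ v : Fin n,
      ((Finset.univ.filter (fun p : Fin n × Fin n => G.Adj p.1 p.2)).filter
        (fun p => p.1 = v)) = {v} ×ˢ G.neighborFinset v := by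
    intro v
    ext ⟨p1, p2⟩
    simp only [Finset.mem_filter, Finset.mem_univ, true_and, Finset.mem_product,
      Finset.mem_singleton, SimpleGraph.mem_neighborFinset]
    constructor
    · rintro ⟨h, rfl⟩; exact ⟨rfl, h⟩
    · rintro ⟨rfl, h⟩; exact ⟨h, rfl⟩
  calc (∑ v : Fin n, ((Finset.univ.filter (fun p : Fin n × Fin n => G.Adj p.1 p.2)).filter
        (fun p => p.1 = v)).card)
      = ∑ v : Fin n, d := by
        refine Finset.sum_congr rfl fun v _ => ?_
        rw [hfib v, Finset.card_product, Finset.card_singleton, one_mul, reg_nbr_card hreg]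
    _ = d * n := by simp [mul_comm]

open Classical in
lemma pairSet_lower (G : SimpleGraph (Fin n)) (hreg : ∀ v, (G.neighborSet v).ncard = d)
    (a b : Fin n) (F : Finset (Sym2 (Fin n))) :
    d * n ≤ (pairSet G a b F).card + (2 * d * (d + 2) + 2 * F.card) := by
  classical
  set S1 : Finset (Fin n) := insert a (insert b (G.neighborFinset a)) with hS1
  set S2 : Finset (Fin n) := insert a (insert b (G.neighborFinset b)) with hS2
  set B1 : Finset (Fin n × Fin n) := S1.biUnion (fun v => {v} ×ˢ G.neighborFinset v) with hB1
  set B2 : Finset (Fin n × Fin n) := S2.biUnion (fun v => G.neighborFinset v ×ˢ {v}) with hB2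
  set B3 : Finset (Fin n × Fin n) :=
    Finset.univ.filter (fun p : Fin n × Fin n => G.Adj p.1 p.2 ∧ s(p.1, p.2) ∈ F) with hB3
  have hcover : (Finset.univ.filter (fun p : Fin n × Fin n => G.Adj p.1 p.2)) ⊆
      pairSet G a b F ∪ (B1 ∪ (B2 ∪ B3)) := by
    intro p hp
    rw [Finset.mem_filter] at hp
    obtain ⟨-, hadj⟩ := hp
    by_cases hc : p.1 ≠ a ∧ p.1 ≠ b ∧ p.2 ≠ a ∧ p.2 ≠ b ∧
        ¬G.Adj a p.1 ∧ ¬G.Adj b p.2 ∧ s(p.1, p.2) ∉ F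
    · exact Finset.mem_union_left _ (by simp [pairSet, hadj, hc])
    · refine Finset.mem_union_right _ ?_
      push_neg at hc
      by_cases h1 : p.1 = a ∨ p.1 = b ∨ G.Adj a p.1
      · refine Finset.mem_union_left _ ?_
        rw [hB1, Finset.mem_biUnion]
        refine ⟨p.1, by simp [hS1, SimpleGraph.mem_neighborFinset]; tauto, ?_⟩
        exact Finset.mem_product.mpr ⟨Finset.mem_singleton_self _,
          (SimpleGraph.mem_neighborFinset _ _ _).mpr hadj⟩
      · refine Finset.mem_union_right _ ?_
        push_neg at h1
        by_cases h2 : p.2 = a ∨ p.2 = b ∨ G.Adj b p.2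
        · refine Finset.mem_union_left _ ?_
          rw [hB2, Finset.mem_biUnion]
          refine ⟨p.2, by simp [hS2, SimpleGraph.mem_neighborFinset]; tauto, ?_⟩
          exact Finset.mem_product.mpr ⟨(SimpleGraph.mem_neighborFinset _ _ _).mpr hadj.symm,
            Finset.mem_singleton_self _⟩
        · push_neg at h2
          refine Finset.mem_union_right _ ?_
          rw [hB3, Finset.mem_filter]
          refine ⟨Finset.mem_univ _, hadj, ?_⟩
          by_contra hF
          exact absurd (hc h1.1 h1.2.1 h2.1 h2.2.1 h1.2.2 h2.2.2) (by simp [hF])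
  have hB1card : B1.card ≤ (d + 2) * d := by
    refine (Finset.card_biUnion_le).trans ?_
    have : ∀ v ∈ S1, ({v} ×ˢ G.neighborFinset v).card = d := by
      intro v _
      rw [Finset.card_product, Finset.card_singleton, one_mul, reg_nbr_card hreg]
    rw [Finset.sum_congr rfl this]
    have hS1card : S1.card ≤ d + 2 := by
      refine (Finset.card_insert_le _ _).trans ?_
      have := (Finset.card_insert_le b (G.neighborFinset a))
      have := reg_nbr_card hreg a
      omega
    calc ∑ _v ∈ S1, d = S1.card * d := by rw [Finset.sum_const, smul_eq_mul]
      _ ≤ (d + 2) * d := Nat.mul_le_mul_right d hS1card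
  have hB2card : B2.card ≤ (d + 2) * d := by
    refine (Finset.card_biUnion_le).trans ?_
    have : ∀ v ∈ S2, (G.neighborFinset v ×ˢ {v}).card = d := by
      intro v _
      rw [Finset.card_product, Finset.card_singleton, mul_one, reg_nbr_card hreg]
    rw [Finset.sum_congr rfl this]
    have hS2card : S2.card ≤ d + 2 := by
      refine (Finset.card_insert_le _ _).trans ?_
      have := (Finset.card_insert_le b (G.neighborFinset b))
      have := reg_nbr_card hreg b
      omega
    calc ∑ _v ∈ S2, d = S2.card * d := by rw [Finset.sum_const, smul_eq_mul]
      _ ≤ (d + 2) * d := Nat.mul_le_mul_right d hS2card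
  have hB3card : B3.card ≤ 2 * F.card := by
    refine le_trans (Finset.card_le_mul_card_image_of_maps_to
      (f := fun p : Fin n × Fin n => s(p.1, p.2)) (t := F) ?_ 2 ?_) le_rfl
    · intro p hp
      rw [hB3, Finset.mem_filter] at hp
      exact hp.2.2
    · intro e _
      induction e using Sym2.ind with
      | _ u v =>
        refine (Finset.card_le_card (t := ({(u, v), (v, u)} : Finset (Fin n × Fin n))) ?_).trans
          (by exact (Finset.card_insert_le _ _).trans (by simp))
        intro p hp
        rw [Finset.mem_filter] at hp
        have := hp.2
        rw [Sym2.eq_iff] at this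
        rcases this with ⟨h1, h2⟩ | ⟨h1, h2⟩
        · simp [Prod.ext_iff, h1, h2]
        · simp [Prod.ext_iff, h1, h2]
  have hadjcard := adj_pairs_card G hreg
  have hmain : d * n ≤ (pairSet G a b F).card + (B1.card + (B2.card + B3.card)) := by
    rw [← hadjcard]
    refine (Finset.card_le_card hcover).trans ?_
    refine (Finset.card_union_le _ _).trans ?_
    have := Finset.card_union_le B1 (B2 ∪ B3)
    have := Finset.card_union_le B2 B3
    omega
  have : B1.card + (B2.card + B3.card) ≤ 2 * d * (d + 2) + 2 * F.card := by
    have h1 := hB1card; have h2 := hB2card; have h3 := hB3card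
    nlinarith
  omega
end counting

section counting2
variable {n d : ℕ}

open Classical in
lemma switching_step (a b : Fin n) (F : Finset (Sym2 (Fin n))) (hab : a ≠ b)
    (habF : s(a,b) ∉ F) :
    (d * n - (2 * d * (d + 2) + 2 * F.card)) * (ASet n d (insert s(a,b) F)).card ≤
      (d * d) * (ASet n d F).card := by
  classical
  set c := 2 * d * (d + 2) + 2 * F.card with hc
  set A1 := ASet n d (insert s(a,b) F) with hA1
  set A0 := ASet n d F with hA0
  -- the sigma set of switchable configurations
  set T : Finset ((_ : SimpleGraph (Fin n)) × (Fin n × Fin n)) :=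
    A1.sigma (fun G => pairSet G a b F) with hT
  -- target configurations
  set T' : Finset ((_ : SimpleGraph (Fin n)) × (Fin n × Fin n)) :=
    A0.sigma (fun G => Finset.univ.filter (fun p : Fin n × Fin n =>
      G.Adj a p.1 ∧ G.Adj b p.2)) with hT'
  have hTcard : (d * n - c) * A1.card ≤ T.card := by
    rw [hT, Finset.card_sigma]
    calc (d * n - c) * A1.card = A1.card * (d * n - c) := Nat.mul_comm _ _
      _ = ∑ _G ∈ A1, (d * n - c) := by rw [Finset.sum_const, smul_eq_mul]
      _ ≤ ∑ G ∈ A1, (pairSet G a b F).card := by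
          refine Finset.sum_le_sum fun G hG => ?_
          rw [hA1, ASet, Finset.mem_filter] at hG
          have := pairSet_lower G hG.2.1 a b F
          omega
  have hT'card : T'.card ≤ A0.card * (d * d) := by
    rw [hT', Finset.card_sigma]
    refine le_trans (Finset.sum_le_sum (g := fun _ => d * d) fun G hG => ?_) ?_
    · rw [hA0, ASet, Finset.mem_filter] at hG
      have hfp : (Finset.univ.filter (fun p : Fin n × Fin n => G.Adj a p.1 ∧ G.Adj b p.2)) =
          G.neighborFinset a ×ˢ G.neighborFinset b := by
        ext ⟨p1, p2⟩
        simp [SimpleGraph.mem_neighborFinset]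
      rw [hfp, Finset.card_product, reg_nbr_card hG.2.1, reg_nbr_card hG.2.1]
    · rw [Finset.sum_const, smul_eq_mul]
  -- the switching map is injective from T into T'
  have hinj : T.card ≤ T'.card := by
    refine Finset.card_le_card_of_injOn
      (fun q => ⟨switchG q.1 a b q.2.1 q.2.2, q.2⟩) ?_ ?_
    · rintro ⟨G, x, y⟩ hq
      rw [hT, Finset.mem_coe, Finset.mem_sigma] at hq
      obtain ⟨hG, hp⟩ := hq
      rw [hA1, ASet, Finset.mem_filter] at hG
      obtain ⟨-, hreg, hsub⟩ := hG
      rw [pairSet, Finset.mem_filter] at hp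
      obtain ⟨-, hxy, hxa, hxb, hya, hyb, hax, hby, hxyF⟩ := hp
      have habG : G.Adj a b := hsub (Finset.mem_coe.mpr (Finset.mem_insert_self _ _))
      rw [hT', Finset.mem_coe, Finset.mem_sigma]
      constructor
      · rw [hA0, ASet, Finset.mem_filter]
        refine ⟨Finset.mem_univ _, switch_regular habG hxy hxa hxb hya hyb hax hby hreg, ?_⟩
        intro e he
        rw [switch_edgeSet habG hxy hxa hxb hya hyb hax hby]
        refine Set.mem_union_left _ ⟨hsub (by simp [he]), ?_⟩
        intro hmem
        rcases hmem with h | h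
        · exact habF (h ▸ he)
        · rw [Set.mem_singleton_iff] at h
          exact hxyF (h ▸ he)
      · rw [Finset.mem_filter]
        refine ⟨Finset.mem_univ _, ?_, ?_⟩
        · exact (switch_adj habG hxy hxa hxb hya hyb hax hby).mpr (Or.inr (Or.inl rfl))
        · exact (switch_adj habG hxy hxa hxb hya hyb hax hby).mpr (Or.inr (Or.inr rfl))
    · rintro ⟨G1, x1, y1⟩ hq1 ⟨G2, x2, y2⟩ hq2 heq
      simp only [Sigma.mk.inj_iff, heq_eq_eq] at heq
      obtain ⟨hGeq, hpeq⟩ := heq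
      obtain ⟨hx, hy⟩ : x1 = x2 ∧ y1 = y2 := Prod.mk.injEq .. ▸ Prod.ext_iff.mp hpeq
      subst hx; subst hy
      rw [Finset.mem_coe, Finset.mem_sigma] at hq1 hq2
      obtain ⟨hG1, hp1⟩ := hq1
      obtain ⟨hG2, hp2⟩ := hq2
      rw [hA1, ASet, Finset.mem_filter] at hG1 hG2
      rw [pairSet, Finset.mem_filter] at hp1 hp2
      obtain ⟨-, hxy1, hxa1, hxb1, hya1, hyb1, hax1, hby1, -⟩ := hp1
      obtain ⟨-, hxy2, hxa2, hxb2, hya2, hyb2, hax2, hby2, -⟩ := hp2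
      have habG1 : G1.Adj a b := hG1.2.2 (Finset.mem_coe.mpr (Finset.mem_insert_self _ _))
      have habG2 : G2.Adj a b := hG2.2.2 (Finset.mem_coe.mpr (Finset.mem_insert_self _ _))
      have e1 := switch_recover habG1 hxy1 hxa1 hxb1 hya1 hyb1 hax1 hby1
      have e2 := switch_recover habG2 hxy2 hxa2 hxb2 hya2 hyb2 hax2 hby2
      have hE : G1.edgeSet = G2.edgeSet := by rw [e1, e2, hGeq]
      rw [SimpleGraph.edgeSet_inj.mp hE]
  calc (d * n - c) * A1.card ≤ T.card := hTcard
    _ ≤ T'.card := hinj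
    _ ≤ A0.card * (d * d) := hT'card
    _ = (d * d) * A0.card := Nat.mul_comm _ _
end counting2

section counting3
variable {n d : ℕ}

open Classical in
lemma ASet_empty : ASet n d (∅ : Finset (Sym2 (Fin n))) = regSet n d := by
  classical
  ext G
  simp [ASet, regSet]

open Classical in
lemma ASet_pow_bound (e0 : ℕ) (F : Finset (Sym2 (Fin n))) (hF : F.card ≤ e0) :
    (d * n - (2 * d * (d + 2) + 2 * e0)) ^ F.card * (ASet n d F).card ≤
      (d * d) ^ F.card * (regSet n d).card := by
  classical
  set c0 := 2 * d * (d + 2) + 2 * e0 with hc0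
  induction' hn : F.card with k ih generalizing F
  case zero =>
    rw [Finset.card_eq_zero] at hn
    subst hn
    simp [ASet_empty]
  case succ =>
    have hne : F.Nonempty := by
      rw [← Finset.card_pos, hn]; omega
    obtain ⟨e, he⟩ := hne
    by_cases hdiag : e.IsDiag
    · have hempty : ASet n d F = ∅ := by
        ext G
        simp only [ASet, Finset.mem_filter, Finset.mem_univ, true_and, Finset.notMem_empty,
          iff_false, not_and]
        intro _ hsub
        exact (G.not_isDiag_of_mem_edgeSet (hsub (Finset.mem_coe.mpr he))) hdiag
      rw [hempty]
      simp
    · revert he hdiag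
      induction e using Sym2.ind with
      | _ a b =>
        intro he hdiag
        rw [Sym2.isDiag_iff_proj_eq] at hdiag
        set F' := F.erase s(a,b) with hF'
        have hFeq : F = insert s(a,b) F' := by
          rw [hF', Finset.insert_erase he]
        have hcard' : F'.card = k := by
          rw [hF', Finset.card_erase_of_mem he, hn]
          omega
        have habF' : s(a,b) ∉ F' := Finset.notMem_erase _ _
        have hstep := switching_step (d := d) a b F' hdiag habF'
        have hcle : 2 * d * (d + 2) + 2 * F'.card ≤ c0 := by
          have : F'.card ≤ e0 := by omega
          omega
        have hmono : (d * n - c0) ≤ (d * n - (2 * d * (d + 2) + 2 * F'.card)) := by omega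
        have hF'le : F'.card ≤ e0 := by omega
        have ihF := ih F' hF'le hcard'
        calc (d * n - c0) ^ (k + 1) * (ASet n d F).card
            = (d * n - c0) ^ k * ((d * n - c0) * (ASet n d (insert s(a,b) F')).card) := by
              rw [← hFeq]; ring
          _ ≤ (d * n - c0) ^ k * ((d * n - (2 * d * (d + 2) + 2 * F'.card)) *
                (ASet n d (insert s(a,b) F')).card) :=
              Nat.mul_le_mul_left _ (Nat.mul_le_mul_right _ hmono)
          _ ≤ (d * n - c0) ^ k * ((d * d) * (ASet n d F').card) :=
              Nat.mul_le_mul_left _ hstep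
          _ = (d * d) * ((d * n - c0) ^ k * (ASet n d F').card) := by ring
          _ ≤ (d * d) * ((d * d) ^ k * (regSet n d).card) :=
              Nat.mul_le_mul_left _ ihF
          _ = (d * d) ^ (k + 1) * (regSet n d).card := by ring

open Classical in
noncomputable def badSet (n d h : ℕ) (H : SimpleGraph (Fin h)) : Finset (SimpleGraph (Fin n)) :=
  Finset.univ.filter (fun G => (∀ v, (G.neighborSet v).ncard = d) ∧
    ∃ f : Fin h ↪ Fin n, ∀ u v, H.Adj u v → G.Adj (f u) (f v))

open Classical in
lemma badSet_bound (h : ℕ) (H : SimpleGraph (Fin h)) :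
    (d * n - (2 * d * (d + 2) + 2 * H.edgeFinset.card)) ^ H.edgeFinset.card *
      (badSet n d h H).card ≤
      n ^ h * ((d * d) ^ H.edgeFinset.card * (regSet n d).card) := by
  classical
  set e0 := H.edgeFinset.card with he0
  set c0 := 2 * d * (d + 2) + 2 * e0 with hc0
  have hcover : badSet n d h H ⊆
      (Finset.univ : Finset (Fin h ↪ Fin n)).biUnion
        (fun f => ASet n d (H.edgeFinset.image (Sym2.map f))) := by
    intro G hG
    rw [badSet, Finset.mem_filter] at hG
    obtain ⟨-, hreg, f, hf⟩ := hG
    rw [Finset.mem_biUnion]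
    refine ⟨f, Finset.mem_univ _, ?_⟩
    rw [ASet, Finset.mem_filter]
    refine ⟨Finset.mem_univ _, hreg, ?_⟩
    intro e hee
    rw [Finset.mem_coe, Finset.mem_image] at hee
    obtain ⟨e', he', rfl⟩ := hee
    rw [SimpleGraph.mem_edgeFinset] at he'
    induction e' using Sym2.ind with
    | _ u v =>
      rw [SimpleGraph.mem_edgeSet] at he'
      rw [Sym2.map_pair_eq, SimpleGraph.mem_edgeSet]
      exact hf u v he'
  have himg_card : ∀ f : Fin h ↪ Fin n,
      (H.edgeFinset.image (Sym2.map f)).card = e0 := by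
    intro f
    rw [Finset.card_image_of_injective _ (Sym2.map.injective f.injective)]
  have hstep : ∀ f : Fin h ↪ Fin n,
      (d * n - c0) ^ e0 * (ASet n d (H.edgeFinset.image (Sym2.map f))).card ≤
        (d * d) ^ e0 * (regSet n d).card := by
    intro f
    have := ASet_pow_bound (d := d) e0 (H.edgeFinset.image (Sym2.map f))
      (le_of_eq (himg_card f))
    rwa [himg_card f] at this
  have hcard1 : (badSet n d h H).card ≤
      ∑ f : Fin h ↪ Fin n, (ASet n d (H.edgeFinset.image (Sym2.map f))).card :=
    le_trans (Finset.card_le_card hcover) (Finset.card_biUnion_le)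
  have hemb : Fintype.card (Fin h ↪ Fin n) ≤ n ^ h := by
    have h1 : Fintype.card (Fin h ↪ Fin n) ≤ Fintype.card (Fin h → Fin n) :=
      Fintype.card_le_of_injective (fun f => (f : Fin h → Fin n)) DFunLike.coe_injective
    simpa using h1
  calc (d * n - c0) ^ e0 * (badSet n d h H).card
      ≤ (d * n - c0) ^ e0 *
          ∑ f : Fin h ↪ Fin n, (ASet n d (H.edgeFinset.image (Sym2.map f))).card :=
        Nat.mul_le_mul_left _ hcard1
    _ = ∑ f : Fin h ↪ Fin n,
          (d * n - c0) ^ e0 * (ASet n d (H.edgeFinset.image (Sym2.map f))).card := by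
        rw [Finset.mul_sum]
    _ ≤ ∑ _f : Fin h ↪ Fin n, (d * d) ^ e0 * (regSet n d).card :=
        Finset.sum_le_sum fun f _ => hstep f
    _ = Fintype.card (Fin h ↪ Fin n) * ((d * d) ^ e0 * (regSet n d).card) := by
        rw [Finset.sum_const, smul_eq_mul, Fintype.card]
    _ ≤ n ^ h * ((d * d) ^ e0 * (regSet n d).card) :=
        Nat.mul_le_mul_right _ hemb
end counting3

lemma exists_reg_zmod (d n : ℕ) (hd : 1 ≤ d) (hn : 2 * d + 2 ≤ n) (hpar : Even (d * n)) :
    ∃ G : SimpleGraph (ZMod n), ∀ v, (G.neighborSet v).ncard = d := by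
  haveI : NeZero n := ⟨by omega⟩
  classical
  set k := d / 2 with hk
  set T : Finset ℕ :=
    (Finset.Icc 1 k ∪ Finset.Icc (n-k) (n-1)) ∪ (if d % 2 = 1 then {n/2} else ∅) with hT
  have hmemT : ∀ t, t ∈ T ↔ ((1 ≤ t ∧ t ≤ k) ∨ (n - k ≤ t ∧ t ≤ n - 1)) ∨
      (d % 2 = 1 ∧ t = n / 2) := by
    intro t
    rw [hT]
    by_cases hpar2 : d % 2 = 1 <;>
      simp [hpar2, Finset.mem_union, Finset.mem_Icc] <;> tauto
  have hTrange : ∀ t ∈ T, 1 ≤ t ∧ t ≤ n - 1 := by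
    intro t ht
    rw [hmemT] at ht
    rcases ht with (⟨h1, h2⟩ | ⟨h1, h2⟩) | ⟨hodd, rfl⟩ <;> omega
  have hTcard : T.card = d := by
    have hd1 : Disjoint (Finset.Icc 1 k) (Finset.Icc (n-k) (n-1)) := by
      rw [Finset.disjoint_left]
      intro t h1 h2
      rw [Finset.mem_Icc] at h1 h2
      omega
    have hd2 : Disjoint ((Finset.Icc 1 k ∪ Finset.Icc (n-k) (n-1)))
        ((if d % 2 = 1 then ({n/2} : Finset ℕ) else ∅)) := by
      rw [Finset.disjoint_left]
      intro t h1 h2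
      rw [Finset.mem_union, Finset.mem_Icc, Finset.mem_Icc] at h1
      by_cases hpar2 : d % 2 = 1 <;> simp [hpar2] at h2
      subst h2
      omega
    rw [hT, Finset.card_union_of_disjoint hd2, Finset.card_union_of_disjoint hd1,
      Nat.card_Icc, Nat.card_Icc]
    by_cases hpar2 : d % 2 = 1 <;> simp [hpar2] <;> omega
  have hTsym : ∀ t ∈ T, n - t ∈ T := by
    intro t ht
    rw [hmemT] at ht ⊢
    have hnev : d % 2 = 1 → n % 2 = 0 := by
      intro hodd
      rcases Nat.even_mul.mp hpar with h | h
      · rw [Nat.even_iff] at h; omega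
      · rw [Nat.even_iff] at h; omega
    rcases ht with (⟨h1, h2⟩ | ⟨h1, h2⟩) | ⟨hodd, rfl⟩
    · exact Or.inl (Or.inr (by omega))
    · exact Or.inl (Or.inl (by omega))
    · exact Or.inr ⟨hodd, by have := hnev hodd; omega⟩
  set S : Finset (ZMod n) := Finset.image (Nat.cast : ℕ → ZMod n) T with hS
  have hval : ∀ t ∈ T, ((t : ZMod n)).val = t := by
    intro t ht
    exact ZMod.val_cast_of_lt (by have := hTrange t ht; omega)
  have hinjT : Set.InjOn (Nat.cast : ℕ → ZMod n) ↑T := by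
    intro t1 h1 t2 h2 he
    have he' : ((t1 : ℕ) : ZMod n) = ((t2 : ℕ) : ZMod n) := he
    rw [← hval t1 (Finset.mem_coe.mp h1), ← hval t2 (Finset.mem_coe.mp h2), he']
  have hScard : S.card = d := by
    rw [hS, Finset.card_image_of_injOn hinjT, hTcard]
  have hS0 : (0 : ZMod n) ∉ S := by
    rw [hS, Finset.mem_image]
    rintro ⟨t, ht, hcast⟩
    have := hval t ht
    have h0 : ((0 : ZMod n)).val = 0 := ZMod.val_zero
    rw [hcast] at this
    rw [this] at h0
    have := hTrange t ht
    omega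
  have hSneg : ∀ s ∈ S, -s ∈ S := by
    intro s hs
    rw [hS, Finset.mem_image] at hs
    obtain ⟨t, ht, rfl⟩ := hs
    have hrange := hTrange t ht
    have hcast : ((n - t : ℕ) : ZMod n) = -(t : ZMod n) := by
      refine eq_neg_of_add_eq_zero_left ?_
      have : ((n - t : ℕ) : ZMod n) + (t : ZMod n) = ((n - t + t : ℕ) : ZMod n) := by
        push_cast; ring
      rw [this, Nat.sub_add_cancel (by omega), ZMod.natCast_self]
    rw [← hcast]
    exact Finset.mem_image_of_mem _ (hTsym t ht)
  refine ⟨⟨fun u v => v - u ∈ S, ?_, ?_⟩, ?_⟩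
  · refine ⟨fun u v h => ?_⟩
    have : u - v = -(v - u) := by ring
    rw [this]
    exact hSneg _ h
  · refine ⟨fun v h => ?_⟩
    simp only [sub_self] at h
    exact hS0 h
  · intro v
    have hset : {w : ZMod n | w - v ∈ S} = (fun s => v + s) '' (S : Set (ZMod n)) := by
      ext w
      simp only [Set.mem_setOf_eq, Set.mem_image, Finset.mem_coe]
      constructor
      · intro h; exact ⟨w - v, h, by ring⟩
      · rintro ⟨s, hs, rfl⟩; simpa using hs
    show ({w : ZMod n | w - v ∈ S}).ncard = d
    rw [hset, Set.ncard_image_of_injective _ (fun s1 s2 h => by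
      have := congrArg (fun z => z - v) h
      simpa using this), Set.ncard_coe_finset, hScard]

lemma exists_reg_fin (d m : ℕ) (hd : 1 ≤ d) (hn : 2 * d + 2 ≤ m + 1)
    (hpar : Even (d * (m + 1))) :
    ∃ G : SimpleGraph (Fin (m + 1)), ∀ v, (G.neighborSet v).ncard = d :=
  exists_reg_zmod d (m + 1) hd hn hpar

variable {n d : ℕ}

lemma boundary_count (G : SimpleGraph (Fin n)) (hreg : ∀ v, (G.neighborSet v).ncard = d)
    (S : Set (Fin n)) :
    ∃ (H : SimpleGraph (Fin (S.ncard))) (f : Fin (S.ncard) ↪ Fin n),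
      (∀ u v, H.Adj u v → G.Adj (f u) (f v)) ∧
      d * S.ncard = 2 * H.edgeSet.ncard +
        {e : Sym2 (Fin n) | ∃ u v, e = s(u,v) ∧ G.Adj u v ∧ u ∈ S ∧ v ∉ S}.ncard := by
  classical
  set s := S.ncard with hs
  haveI : Fintype ↥S := S.toFinite.fintype
  have hcards : Fintype.card ↥S = s := by
    rw [← Nat.card_eq_fintype_card, Nat.card_coe_set_eq]
  set e := Fintype.equivFinOfCardEq hcards with he
  set fmap : Fin s → Fin n := fun i => ((e.symm i : ↥S) : Fin n) with hfmap
  have hfS : ∀ i, fmap i ∈ S := fun i => (e.symm i).2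
  have hfinj : Injective fmap := Subtype.val_injective.comp e.symm.injective
  set H := G.comap fmap with hH
  refine ⟨H, ⟨fmap, hfinj⟩, fun u v h => h, ?_⟩
  set SF := S.toFinset with hSF
  have hSFcard : SF.card = s := (Set.ncard_eq_toFinset_card' S).symm
  have hdeg : ∀ u : Fin n, (G.neighborFinset u).card = d := by
    intro u
    rw [SimpleGraph.neighborFinset_def, ← Set.ncard_eq_toFinset_card', hreg u]
  -- split each degree into inside/outside
  have hsplit : ∀ u : Fin n,
      (G.neighborFinset u ∩ SF).card + (G.neighborFinset u \ SF).card = d := by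
    intro u
    rw [Finset.card_inter_add_card_sdiff, hdeg u]
  have hsum : (∑ u ∈ SF, (G.neighborFinset u ∩ SF).card) +
      (∑ u ∈ SF, (G.neighborFinset u \ SF).card) = d * s := by
    rw [← Finset.sum_add_distrib]
    calc (∑ u ∈ SF, ((G.neighborFinset u ∩ SF).card + (G.neighborFinset u \ SF).card))
        = ∑ _u ∈ SF, d := Finset.sum_congr rfl fun u _ => hsplit u
      _ = d * s := by rw [Finset.sum_const, smul_eq_mul, hSFcard, Nat.mul_comm]
  -- inside sum = 2 * edge count of H
  have hHdeg : ∀ i : Fin s, H.degree i = (G.neighborFinset (fmap i) ∩ SF).card := by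
    intro i
    rw [SimpleGraph.degree]
    refine Finset.card_bij (fun j _ => fmap j) ?_ ?_ ?_
    · intro j hj
      rw [SimpleGraph.mem_neighborFinset] at hj
      rw [Finset.mem_inter, SimpleGraph.mem_neighborFinset]
      exact ⟨hj, by rw [hSF, Set.mem_toFinset]; exact hfS j⟩
    · intro j1 _ j2 _ hj
      exact hfinj hj
    · intro w hw
      rw [Finset.mem_inter, SimpleGraph.mem_neighborFinset] at hw
      obtain ⟨hadj, hwS⟩ := hw
      rw [hSF, Set.mem_toFinset] at hwS
      refine ⟨e ⟨w, hwS⟩, ?_, ?_⟩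
      · rw [SimpleGraph.mem_neighborFinset]
        show G.Adj (fmap i) (fmap (e ⟨w, hwS⟩))
        have : fmap (e ⟨w, hwS⟩) = w := by
          rw [hfmap]; simp
        rw [this]
        exact hadj
      · show fmap (e ⟨w, hwS⟩) = w
        simp [hfmap]
  have hinsum : (∑ u ∈ SF, (G.neighborFinset u ∩ SF).card) = 2 * H.edgeFinset.card := by
    rw [← SimpleGraph.sum_degrees_eq_twice_card_edges]
    refine (Finset.sum_bij (fun (i : Fin s) (_ : i ∈ Finset.univ) => fmap i)
      ?_ ?_ ?_ ?_).symm
    · intro i _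
      rw [hSF, Set.mem_toFinset]
      exact hfS i
    · intro i1 _ i2 _ hij
      exact hfinj hij
    · intro u hu
      rw [hSF, Set.mem_toFinset] at hu
      refine ⟨e ⟨u, hu⟩, Finset.mem_univ _, ?_⟩
      rw [hfmap]; simp
    · intro i _
      exact hHdeg i
  -- outside sum = boundary size
  set P : Finset (Fin n × Fin n) :=
    (SF ×ˢ Finset.univ).filter (fun p => G.Adj p.1 p.2 ∧ p.2 ∉ SF) with hP
  have houtsum : (∑ u ∈ SF, (G.neighborFinset u \ SF).card) = P.card := by
    rw [Finset.card_eq_sum_card_fiberwise (f := Prod.fst) (t := SF) ?_]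
    · refine Finset.sum_congr rfl fun u hu => ?_
      have hfib : P.filter (fun p => p.1 = u) = {u} ×ˢ (G.neighborFinset u \ SF) := by
        ext ⟨p1, p2⟩
        simp only [hP, Finset.mem_filter, Finset.mem_product, Finset.mem_univ, true_and,
          and_true, Finset.mem_singleton, Finset.mem_sdiff, SimpleGraph.mem_neighborFinset]
        constructor
        · rintro ⟨⟨hp1, hadj, hp2⟩, rfl⟩
          exact ⟨rfl, hadj, hp2⟩
        · rintro ⟨rfl, hadj, hp2⟩
          exact ⟨⟨hu, hadj, hp2⟩, rfl⟩
      rw [hfib, Finset.card_product, Finset.card_singleton, one_mul]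
    · intro p hp
      rw [Finset.mem_coe, hP, Finset.mem_filter, Finset.mem_product] at hp
      exact hp.1.1
  have hbset : {e : Sym2 (Fin n) | ∃ u v, e = s(u,v) ∧ G.Adj u v ∧ u ∈ S ∧ v ∉ S} =
      ↑(P.image (fun p => s(p.1, p.2))) := by
    ext ed
    simp only [Set.mem_setOf_eq, Finset.coe_image, Set.mem_image, Finset.mem_coe]
    constructor
    · rintro ⟨u, v, rfl, hadj, hu, hv⟩
      refine ⟨(u, v), ?_, rfl⟩
      rw [hP, Finset.mem_filter, Finset.mem_product]
      refine ⟨⟨by rw [hSF, Set.mem_toFinset]; exact hu, Finset.mem_univ _⟩, hadj, ?_⟩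
      rw [hSF, Set.mem_toFinset]
      exact hv
    · rintro ⟨⟨u, v⟩, hp, rfl⟩
      rw [hP, Finset.mem_filter, Finset.mem_product] at hp
      obtain ⟨⟨hu, -⟩, hadj, hv⟩ := hp
      rw [hSF, Set.mem_toFinset] at hu hv
      exact ⟨u, v, rfl, hadj, hu, hv⟩
  have hbcard : {e : Sym2 (Fin n) | ∃ u v, e = s(u,v) ∧ G.Adj u v ∧ u ∈ S ∧ v ∉ S}.ncard
      = P.card := by
    rw [hbset, Set.ncard_coe_finset]
    refine Finset.card_image_of_injOn ?_
    rintro ⟨u1, v1⟩ h1 ⟨u2, v2⟩ h2 hs12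
    rw [Finset.mem_coe, hP, Finset.mem_filter, Finset.mem_product] at h1 h2
    obtain ⟨⟨hu1, -⟩, -, hv1⟩ := h1
    obtain ⟨⟨hu2, -⟩, -, hv2⟩ := h2
    have := hs12
    rw [Sym2.eq_iff] at this
    rcases this with ⟨ha, hb⟩ | ⟨ha, hb⟩
    · rw [Prod.mk.injEq]; exact ⟨ha, hb⟩
    · exfalso
      rw [ha] at hu1
      exact hv2 hu1
  have hedge : H.edgeSet.ncard = H.edgeFinset.card := by
    simp [Set.ncard_eq_toFinset_card', SimpleGraph.edgeFinset]
  rw [hedge, hbcard, ← hinsum, ← houtsum]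
  omega

lemma ratio_tendsto_one (F : Filter ℕ) (hF : F ≤ atTop) (C : ℕ) (num den : ℕ → ℕ)
    (hle : ∀ᶠ n in F, num n ≤ den n)
    (hpos : ∀ᶠ n in F, 0 < den n)
    (hbound : ∀ᶠ n in F, n * (den n - num n) ≤ C * den n) :
    Tendsto (fun n => (num n : ℝ) / (den n : ℝ)) F (nhds 1) := by
  have h1 : Tendsto (fun n : ℕ => 1 - (C : ℝ) / n) F (nhds 1) := by
    have h2 : Tendsto (fun n : ℕ => (C : ℝ) / n) F (nhds 0) :=
      (tendsto_const_div_atTop_nhds_zero_nat (C : ℝ)).mono_left hF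
    simpa using (tendsto_const_nhds (x := (1:ℝ)) (f := F)).sub h2
  refine tendsto_of_tendsto_of_tendsto_of_le_of_le' h1 tendsto_const_nhds ?_ ?_
  · filter_upwards [hle, hpos, hbound, (eventually_ge_atTop 1).filter_mono hF]
      with n h1 h2 h3 h4
    have hden : (0:ℝ) < den n := by exact_mod_cast h2
    have hn : (0:ℝ) < n := by exact_mod_cast h4
    have hnum : (num n : ℝ) / den n = 1 - ((den n - num n : ℕ) : ℝ) / den n := by
      rw [Nat.cast_sub h1]
      rw [sub_div, div_self hden.ne']; ring
    rw [hnum]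
    have hfrac : ((den n - num n : ℕ) : ℝ) / den n ≤ (C : ℝ) / n := by
      rw [div_le_div_iff₀ hden hn]
      have : ((n : ℕ) : ℝ) * ((den n - num n : ℕ) : ℝ) ≤ (C : ℝ) * den n := by
        exact_mod_cast h3
      nlinarith [this]
    linarith
  · filter_upwards [hle, hpos] with n h1 h2
    rw [div_le_one (by exact_mod_cast h2)]
    exact_mod_cast h1

lemma key_nat (d h e0 b r n : ℕ) (hd : 4 ≤ d) (he0 : h + 1 ≤ e0) (hn1 : 1 ≤ n)
    (hc : 2 * d * (d + 2) + 2 * e0 ≤ 3 * n)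
    (hkey : (d * n - (2 * d * (d + 2) + 2 * e0)) ^ e0 * b ≤ n ^ h * ((d * d) ^ e0 * r)) :
    n * b ≤ (d * d) ^ e0 * r := by
  set c0 := 2 * d * (d + 2) + 2 * e0 with hc0
  have hX : n ≤ d * n - c0 := by
    refine Nat.le_sub_of_add_le ?_
    calc n + c0 ≤ 4 * n := by omega
      _ ≤ d * n := Nat.mul_le_mul_right n hd
  have h1 : n ^ e0 * b ≤ n ^ h * ((d * d) ^ e0 * r) :=
    le_trans (Nat.mul_le_mul_right b (Nat.pow_le_pow_left hX e0)) hkey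
  have h2 : n ^ h * (n * b) ≤ n ^ h * ((d * d) ^ e0 * r) := by
    refine le_trans ?_ h1
    have : n ^ h * n ≤ n ^ e0 := by
      calc n ^ h * n = n ^ (h + 1) := by rw [pow_succ]
        _ ≤ n ^ e0 := Nat.pow_le_pow_right hn1 he0
    calc n ^ h * (n * b) = (n ^ h * n) * b := by ring
      _ ≤ n ^ e0 * b := Nat.mul_le_mul_right b this
  exact Nat.le_of_mul_le_mul_left h2 (pow_pos (by omega : 0 < n) h)

open Classical in
lemma ncard_graphSet {n : ℕ} (p : SimpleGraph (Fin n) → Prop) :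
    {G : SimpleGraph (Fin n) | p G}.ncard = (Finset.univ.filter p).card := by
  rw [← Set.ncard_coe_finset]
  congr 1
  ext G
  simp

open Classical in
lemma edgeSet_ncard_eq {m : ℕ} (H : SimpleGraph (Fin m)) :
    H.edgeSet.ncard = H.edgeFinset.card := by
  simp [Set.ncard_eq_toFinset_card', SimpleGraph.edgeFinset]

lemma he0_ge (d h e0 : ℕ) (hd : 4 ≤ d) (h3 : 3 ≤ h) (hE : d * h ≤ 2 * e0 + d) :
    h + 1 ≤ e0 := by
  have h1 : 4 * (h - 1) ≤ d * (h - 1) := Nat.mul_le_mul_right _ hd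
  have h2 : d * (h - 1) + d = d * h := by
    have hh : h - 1 + 1 = h := by omega
    calc d * (h - 1) + d = d * ((h - 1) + 1) := by ring
      _ = d * h := by rw [hh]
  omega

open Classical in
lemma regSet_pos (d : ℕ) (hd : 4 ≤ d) :
    ∀ᶠ n in (atTop ⊓ Filter.principal {n : ℕ | Even (d * n)}), 0 < (regSet n d).card := by
  rw [eventually_inf_principal]
  filter_upwards [eventually_ge_atTop (2 * d + 2)] with n hn hev
  obtain ⟨m, rfl⟩ : ∃ m, n = m + 1 := ⟨n - 1, by omega⟩
  obtain ⟨G, hG⟩ := exists_reg_fin d m (by omega) (by omega) hev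
  exact Finset.card_pos.mpr ⟨G, by rw [regSet, Finset.mem_filter]; exact ⟨Finset.mem_univ _, hG⟩⟩

open Classical in
lemma regSet_ncard (d n : ℕ) :
    {G : SimpleGraph (Fin n) | IsRegularGraph G d}.ncard = (regSet n d).card := by
  rw [ncard_graphSet]
  congr 1
  ext G
  rw [regSet, Finset.mem_filter, Finset.mem_filter]
  simp [IsRegularGraph]

open Classical in
lemma badSet_subset (d n h : ℕ) (H : SimpleGraph (Fin h)) :
    badSet n d h H ⊆ regSet n d := by
  intro G hG
  rw [badSet, Finset.mem_filter] at hG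
  rw [regSet, Finset.mem_filter]
  exact ⟨hG.1, hG.2.1⟩

open Classical in
lemma part1_tendsto (d : ℕ) (hd : 4 ≤ d) (h : ℕ) (H : SimpleGraph (Fin h)) (h3 : 3 ≤ h)
    (hE : d * h ≤ 2 * H.edgeSet.ncard + d) :
    Tendsto (fun n : ℕ =>
        ({G : SimpleGraph (Fin n) | IsRegularGraph G d ∧
            ¬ ∃ f : Fin h ↪ Fin n, ∀ u v, H.Adj u v → G.Adj (f u) (f v)}.ncard : ℝ) /
          ({G : SimpleGraph (Fin n) | IsRegularGraph G d}.ncard : ℝ))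
      (atTop ⊓ Filter.principal {n : ℕ | Even (d * n)}) (nhds 1) := by
  classical
  set F := atTop ⊓ Filter.principal {n : ℕ | Even (d * n)} with hFdef
  have hFle : F ≤ atTop := inf_le_left
  set e0 := H.edgeFinset.card with he0def
  have hEe : H.edgeSet.ncard = e0 := edgeSet_ncard_eq H
  have he0 : h + 1 ≤ e0 := he0_ge d h e0 hd h3 (by rw [← hEe]; exact hE)
  have hnum : ∀ n : ℕ, ({G : SimpleGraph (Fin n) | IsRegularGraph G d ∧
      ¬ ∃ f : Fin h ↪ Fin n, ∀ u v, H.Adj u v → G.Adj (f u) (f v)}.ncard) =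
      (regSet n d).card - (badSet n d h H).card := by
    intro n
    have hfil : {G : SimpleGraph (Fin n) | IsRegularGraph G d ∧
        ¬ ∃ f : Fin h ↪ Fin n, ∀ u v, H.Adj u v → G.Adj (f u) (f v)} =
        ↑(regSet n d \ badSet n d h H) := by
      ext G
      simp only [regSet, badSet, Set.mem_setOf_eq, Finset.coe_sdiff, Set.mem_diff,
        Finset.mem_coe, Finset.mem_filter, Finset.mem_univ, true_and, IsRegularGraph]
      tauto
    rw [hfil, Set.ncard_coe_finset, Finset.card_sdiff_of_subset (badSet_subset d n h H)]
  have hbound : ∀ᶠ n in F, n * ((regSet n d).card -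
      ((regSet n d).card - (badSet n d h H).card)) ≤ (d * d) ^ e0 * (regSet n d).card := by
    have hev : ∀ᶠ n in F, max 1 (2 * d * (d + 2) + 2 * e0) ≤ n :=
      (eventually_ge_atTop _).filter_mono hFle
    filter_upwards [hev] with n hn
    have hble : (badSet n d h H).card ≤ (regSet n d).card :=
      Finset.card_le_card (badSet_subset d n h H)
    have heq : (regSet n d).card - ((regSet n d).card - (badSet n d h H).card) =
        (badSet n d h H).card := by omega
    rw [heq]
    refine key_nat d h e0 _ _ n hd he0 (by omega) (by omega) ?_
    exact badSet_bound h H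
  have htend := ratio_tendsto_one F hFle ((d * d) ^ e0)
    (fun n => (regSet n d).card - (badSet n d h H).card) (fun n => (regSet n d).card)
    (Eventually.of_forall fun n => Nat.sub_le _ _) (regSet_pos d hd) hbound
  have hfun : (fun n : ℕ =>
      ({G : SimpleGraph (Fin n) | IsRegularGraph G d ∧
          ¬ ∃ f : Fin h ↪ Fin n, ∀ u v, H.Adj u v → G.Adj (f u) (f v)}.ncard : ℝ) /
        ({G : SimpleGraph (Fin n) | IsRegularGraph G d}.ncard : ℝ)) =
      (fun n => (((regSet n d).card - (badSet n d h H).card : ℕ) : ℝ) /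
        (((regSet n d).card : ℕ) : ℝ)) := by
    funext n
    rw [hnum n, regSet_ncard d n]
  rw [hfun]
  exact htend

open Classical in
lemma part2_tendsto (d : ℕ) (hd : 4 ≤ d) (K : ℕ) :
    Tendsto (fun n : ℕ =>
        ({G : SimpleGraph (Fin n) | IsRegularGraph G d ∧
            ∀ Ht : G.Subgraph, 3 ≤ Ht.verts.ncard → Ht.verts.ncard ≤ K →
              d + 1 ≤ (edgeBoundary G Ht).ncard}.ncard : ℝ) /
          ({G : SimpleGraph (Fin n) | IsRegularGraph G d}.ncard : ℝ))
      (atTop ⊓ Filter.principal {n : ℕ | Even (d * n)}) (nhds 1) := by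
  classical
  set F := atTop ⊓ Filter.principal {n : ℕ | Even (d * n)} with hFdef
  have hFle : F ≤ atTop := inf_le_left
  set I : Finset ((h : ℕ) × SimpleGraph (Fin h)) :=
    (Finset.range (K + 1)).sigma (fun h => Finset.univ.filter
      (fun H : SimpleGraph (Fin h) => 3 ≤ h ∧ d * h ≤ 2 * H.edgeSet.ncard + d)) with hI
  set mFin : (n : ℕ) → Finset (SimpleGraph (Fin n)) := fun n =>
    Finset.univ.filter (fun G : SimpleGraph (Fin n) => IsRegularGraph G d ∧
      ∀ Ht : G.Subgraph, 3 ≤ Ht.verts.ncard → Ht.verts.ncard ≤ K →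
        d + 1 ≤ (edgeBoundary G Ht).ncard) with hmFin
  have hincl : ∀ n : ℕ, regSet n d \ I.biUnion (fun i => badSet n d i.1 i.2) ⊆ mFin n := by
    intro n G hG
    rw [Finset.mem_sdiff] at hG
    obtain ⟨hGreg, hGnb⟩ := hG
    rw [regSet, Finset.mem_filter] at hGreg
    have hreg := hGreg.2
    rw [hmFin, Finset.mem_filter]
    refine ⟨Finset.mem_univ _, hreg, ?_⟩
    intro Ht h3t hKt
    obtain ⟨H', f, hf, hcount⟩ := boundary_count G hreg Ht.verts
    by_contra hlt
    push_neg at hlt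
    have hbnd : ({e : Sym2 (Fin n) | ∃ u v, e = s(u,v) ∧ G.Adj u v ∧
        u ∈ Ht.verts ∧ v ∉ Ht.verts}).ncard ≤ d := by
      have : (edgeBoundary G Ht).ncard ≤ d := by omega
      exact this
    have hcond : d * Ht.verts.ncard ≤ 2 * H'.edgeSet.ncard + d := by
      rw [hcount]
      omega
    have hiI : (⟨Ht.verts.ncard, H'⟩ : (h : ℕ) × SimpleGraph (Fin h)) ∈ I := by
      rw [hI, Finset.mem_sigma, Finset.mem_range, Finset.mem_filter]
      exact ⟨show Ht.verts.ncard < K + 1 by omega, Finset.mem_univ _, h3t, hcond⟩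
    have hGbad : G ∈ badSet n d Ht.verts.ncard H' := by
      rw [badSet, Finset.mem_filter]
      exact ⟨Finset.mem_univ _, hreg, f, hf⟩
    exact hGnb (Finset.mem_biUnion.mpr ⟨_, hiI, hGbad⟩)
  have hm_le : ∀ n, (mFin n).card ≤ (regSet n d).card := by
    intro n
    refine Finset.card_le_card ?_
    intro G hG
    rw [hmFin, Finset.mem_filter] at hG
    rw [regSet, Finset.mem_filter]
    exact ⟨Finset.mem_univ _, hG.2.1⟩
  have hm_ge : ∀ n, (regSet n d).card - (∑ i ∈ I, (badSet n d i.1 i.2).card) ≤ (mFin n).card := by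
    intro n
    have h1 := Finset.card_le_card (hincl n)
    have h2 : (regSet n d).card - (I.biUnion (fun i => badSet n d i.1 i.2)).card ≤
        (regSet n d \ I.biUnion (fun i => badSet n d i.1 i.2)).card := Finset.le_card_sdiff _ _
    have h3 : (I.biUnion (fun i => badSet n d i.1 i.2)).card ≤
        ∑ i ∈ I, (badSet n d i.1 i.2).card := Finset.card_biUnion_le
    omega
  set Ctot := ∑ i ∈ I, (d * d) ^ (i.2.edgeFinset.card) with hCtot
  have hbound : ∀ᶠ n in F, n * ((regSet n d).card - (mFin n).card) ≤
      Ctot * (regSet n d).card := by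
    set Nb := 1 + ∑ i ∈ I, (2 * d * (d + 2) + 2 * i.2.edgeFinset.card) with hNb
    filter_upwards [(eventually_ge_atTop Nb).filter_mono hFle] with n hn
    have hterm : ∀ i ∈ I, n * (badSet n d i.1 i.2).card ≤
        (d * d) ^ (i.2.edgeFinset.card) * (regSet n d).card := by
      intro i hiI
      have hci : 2 * d * (d + 2) + 2 * i.2.edgeFinset.card ≤
          ∑ j ∈ I, (2 * d * (d + 2) + 2 * j.2.edgeFinset.card) :=
        Finset.single_le_sum (f := fun j : (h : ℕ) × SimpleGraph (Fin h) =>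
          2 * d * (d + 2) + 2 * j.2.edgeFinset.card) (fun j _ => Nat.zero_le _) hiI
      rw [hI, Finset.mem_sigma, Finset.mem_range, Finset.mem_filter] at hiI
      obtain ⟨hiK, -, h3i, hEi⟩ := hiI
      have hEi' : d * i.1 ≤ 2 * i.2.edgeFinset.card + d := by
        rw [edgeSet_ncard_eq] at hEi
        exact hEi
      have he0i : i.1 + 1 ≤ i.2.edgeFinset.card := he0_ge d i.1 _ hd h3i hEi'
      exact key_nat d i.1 _ _ _ n hd he0i (by omega) (by omega) (badSet_bound i.1 i.2)
    have hrm : (regSet n d).card - (mFin n).card ≤ ∑ i ∈ I, (badSet n d i.1 i.2).card := by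
      have := hm_ge n
      have := hm_le n
      omega
    calc n * ((regSet n d).card - (mFin n).card)
        ≤ n * ∑ i ∈ I, (badSet n d i.1 i.2).card := Nat.mul_le_mul_left n hrm
      _ = ∑ i ∈ I, n * (badSet n d i.1 i.2).card := Finset.mul_sum _ _ _
      _ ≤ ∑ i ∈ I, (d * d) ^ (i.2.edgeFinset.card) * (regSet n d).card :=
          Finset.sum_le_sum hterm
      _ = Ctot * (regSet n d).card := by rw [hCtot, Finset.sum_mul]
  have htend := ratio_tendsto_one F hFle Ctot (fun n => (mFin n).card)
    (fun n => (regSet n d).card) (Eventually.of_forall hm_le) (regSet_pos d hd) hbound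
  have hfun : (fun n : ℕ =>
      ({G : SimpleGraph (Fin n) | IsRegularGraph G d ∧
          ∀ Ht : G.Subgraph, 3 ≤ Ht.verts.ncard → Ht.verts.ncard ≤ K →
            d + 1 ≤ (edgeBoundary G Ht).ncard}.ncard : ℝ) /
        ({G : SimpleGraph (Fin n) | IsRegularGraph G d}.ncard : ℝ)) =
      (fun n => (((mFin n).card : ℕ) : ℝ) / (((regSet n d).card : ℕ) : ℝ)) := by
    funext n
    have hset : {G : SimpleGraph (Fin n) | IsRegularGraph G d ∧
        ∀ Ht : G.Subgraph, 3 ≤ Ht.verts.ncard → Ht.verts.ncard ≤ K →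
          d + 1 ≤ (edgeBoundary G Ht).ncard} = ↑(mFin n) := by
      ext G
      rw [hmFin]
      simp only [Set.mem_setOf_eq, Finset.coe_filter, Finset.mem_univ, true_and,
        Set.mem_setOf_eq]
    rw [hset, Set.ncard_coe_finset, regSet_ncard d n]
  rw [hfun]
  exact htend


/-- For `d ≥ 4`, a uniformly random `d`-regular graph on `[n]` (with `dn` even) whp
contains no copy of any fixed graph `H` with `|V(H)| ≥ 3` and `|E(H)| ≥ (d|V(H)| - d)/2`;
consequently, whp every subgraph on at least 3 and boundedly many vertices has edge
boundary of size at least `d + 1`. Probabilities are written as counting ratios. -/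
theorem random_regular_graph_no_dense_subgraphs (d : ℕ) (hd : 4 ≤ d) :
    (∀ (h : ℕ) (H : SimpleGraph (Fin h)), 3 ≤ h → d * h ≤ 2 * H.edgeSet.ncard + d →
      Tendsto (fun n : ℕ =>
          ({G : SimpleGraph (Fin n) | IsRegularGraph G d ∧
              ¬ ∃ f : Fin h ↪ Fin n, ∀ u v, H.Adj u v → G.Adj (f u) (f v)}.ncard : ℝ) /
            ({G : SimpleGraph (Fin n) | IsRegularGraph G d}.ncard : ℝ))
        (atTop ⊓ Filter.principal {n : ℕ | Even (d * n)}) (nhds 1)) ∧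
    (∀ K : ℕ, Tendsto (fun n : ℕ =>
          ({G : SimpleGraph (Fin n) | IsRegularGraph G d ∧
              ∀ Ht : G.Subgraph, 3 ≤ Ht.verts.ncard → Ht.verts.ncard ≤ K →
                d + 1 ≤ (edgeBoundary G Ht).ncard}.ncard : ℝ) /
            ({G : SimpleGraph (Fin n) | IsRegularGraph G d}.ncard : ℝ))
        (atTop ⊓ Filter.principal {n : ℕ | Even (d * n)}) (nhds 1)) := by
  exact ⟨fun h H h3 hE => part1_tendsto d hd h H h3 hE, fun K => part2_tendsto d hd K⟩
end

section
/- Fix ε > 0 and let n! denote the number of rooted oriented squares of Hamilton cycles on [n]. Let m = ⌊(1+ε)√(e/n)·C(n,2)⌋ and f = 2n (edges of the square of an n-cycle). Then M := n! · C(N−f, m−t)/C(N, m+f−t) satisfies M = (1+ε)^{(2−o(1))n} for every fixed t ∈ {0,…,f}, where N = C(n,2); in particular M → ∞ superexponentially in n. -/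
open Filter Real

private lemma aux_asc_lb (a : ℕ) : ∀ k : ℕ, a.factorial * (a+1)^k ≤ (a+k).factorial := by
  intro k
  induction k with
  | zero => simp
  | succ k ih =>
      have h1 : a + 1 ≤ a + k + 1 := by omega
      calc a.factorial * (a+1)^(k+1) = a.factorial * (a+1)^k * (a+1) := by ring
        _ ≤ (a+k).factorial * (a+k+1) := Nat.mul_le_mul ih h1
        _ = (a+(k+1)).factorial := by rw [show a+(k+1) = (a+k)+1 by omega, Nat.factorial_succ]; ring

private lemma aux_asc_ub (a : ℕ) : ∀ k : ℕ, (a+k).factorial ≤ a.factorial * (a+k)^k := by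
  intro k
  induction k with
  | zero => simp
  | succ k ih =>
      have h1 : (a+k)^k ≤ (a+k+1)^k := Nat.pow_le_pow_left (by omega) k
      calc (a+(k+1)).factorial = (a+k).factorial * (a+k+1) := by
            rw [show a+(k+1) = (a+k)+1 by omega, Nat.factorial_succ]; ring
        _ ≤ a.factorial * (a+k)^k * (a+k+1) := Nat.mul_le_mul_right _ ih
        _ ≤ a.factorial * (a+k+1)^k * (a+k+1) := by
            exact Nat.mul_le_mul_right _ (Nat.mul_le_mul_left _ h1)
        _ = a.factorial * (a+(k+1))^(k+1) := by rw [show a+(k+1) = (a+k)+1 by omega]; ring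

private lemma aux_fact_lb : ∀ n : ℕ, (n:ℝ) * Real.log n - n ≤ Real.log (n.factorial) := by
  intro n
  induction n with
  | zero => simp
  | succ n ih =>
      have hfac : ((n+1).factorial : ℝ) = (n+1) * n.factorial := by
        rw [Nat.factorial_succ]; push_cast; ring
      have hpos : (0:ℝ) < n.factorial := by positivity
      have hlog : Real.log ((n+1).factorial) = Real.log (n+1) + Real.log (n.factorial) := by
        rw [hfac, Real.log_mul (by positivity) (ne_of_gt hpos)]
      have key : (n:ℝ) * Real.log (n+1) - (n:ℝ) * Real.log n ≤ 1 := by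
        rcases Nat.eq_zero_or_pos n with h | h
        · subst h; simp
        · have hn : (0:ℝ) < n := by exact_mod_cast h
          have : Real.log ((n+1)/n) ≤ (n+1)/n - 1 :=
            Real.log_le_sub_one_of_pos (by positivity)
          rw [Real.log_div (by positivity) (ne_of_gt hn)] at this
          have h2 : (n+1:ℝ)/n - 1 = 1/n := by field_simp; ring
          rw [h2] at this
          calc (n:ℝ) * Real.log (n+1) - (n:ℝ) * Real.log n
              = n * (Real.log (n+1) - Real.log n) := by ring
            _ ≤ n * (1/n) := by
                apply mul_le_mul_of_nonneg_left this (le_of_lt hn)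
            _ = 1 := by field_simp
      have : ((n:ℝ)+1) * Real.log (n+1) - (n+1) ≤ Real.log (n+1) + ((n:ℝ) * Real.log n - n) := by
        nlinarith [key]
      push_cast
      rw [hlog]
      linarith [ih]

private lemma aux_fact_ub : ∀ n : ℕ, 1 ≤ n →
    Real.log (n.factorial) ≤ (n:ℝ) * Real.log n - n + 1 + Real.log n := by
  intro n
  induction n with
  | zero => omega
  | succ n ih =>
      intro _
      rcases Nat.eq_zero_or_pos n with h | h
      · subst h; simp
      · have ihn := ih h
        have hn : (0:ℝ) < n := by exact_mod_cast h
        have hfac : ((n+1).factorial : ℝ) = (n+1) * n.factorial := by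
          rw [Nat.factorial_succ]; push_cast; ring
        have hpos : (0:ℝ) < n.factorial := by positivity
        have hlog : Real.log ((n+1).factorial) = Real.log (n+1) + Real.log (n.factorial) := by
          rw [hfac, Real.log_mul (by positivity) (ne_of_gt hpos)]
        have key : 1 ≤ ((n:ℝ)+1) * (Real.log (n+1) - Real.log n) := by
          have h1 : Real.log ((n:ℝ)/(n+1)) ≤ (n:ℝ)/(n+1) - 1 :=
            Real.log_le_sub_one_of_pos (by positivity)
          rw [Real.log_div (ne_of_gt hn) (by positivity)] at h1
          have h2 : (n:ℝ)/(n+1) - 1 = -(1/(n+1)) := by field_simp; ring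
          rw [h2] at h1
          have h3 : 1/((n:ℝ)+1) ≤ Real.log (n+1) - Real.log n := by linarith
          calc (1:ℝ) = ((n:ℝ)+1) * (1/((n:ℝ)+1)) := by field_simp
            _ ≤ ((n:ℝ)+1) * (Real.log (n+1) - Real.log n) := by
                apply mul_le_mul_of_nonneg_left h3 (by positivity)
        push_cast
        rw [hlog]
        nlinarith [key, ihn]

private lemma sqrt_nat_atTop : Tendsto (fun n : ℕ => Real.sqrt n) atTop atTop := by
  apply tendsto_atTop.2
  intro b
  filter_upwards [eventually_ge_atTop (⌈b^2⌉₊ + 1)] with n hn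
  have h1 : b^2 ≤ (n:ℝ) := by
    calc b^2 ≤ (⌈b^2⌉₊ : ℝ) := Nat.le_ceil _
      _ ≤ n := by exact_mod_cast by omega
  calc b ≤ |b| := le_abs_self b
    _ = Real.sqrt (b^2) := (Real.sqrt_sq_eq_abs b).symm
    _ ≤ Real.sqrt n := Real.sqrt_le_sqrt h1

private noncomputable def xf (ε : ℝ) (n : ℕ) : ℝ :=
  (1 + ε) * Real.sqrt (Real.exp 1 / n) * (n.choose 2 : ℝ)

private noncomputable def af (ε : ℝ) (t : ℕ → ℕ) (n : ℕ) : ℕ := ⌊xf ε n⌋₊ - t n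

private noncomputable def Mf (ε : ℝ) (t : ℕ → ℕ) (n : ℕ) : ℝ :=
  (n.factorial : ℝ) *
    (((n.choose 2 - 2 * n).choose
      (⌊(1 + ε) * Real.sqrt (Real.exp 1 / n) * (n.choose 2 : ℝ)⌋₊ - t n) : ℕ) : ℝ) /
    (((n.choose 2).choose
      (⌊(1 + ε) * Real.sqrt (Real.exp 1 / n) * (n.choose 2 : ℝ)⌋₊ + 2 * n - t n) : ℕ) : ℝ)

private noncomputable def lof (ε : ℝ) (t : ℕ → ℕ) (n : ℕ) : ℝ :=
  ((n:ℝ) * Real.log n - n) + 2*(n:ℝ) * Real.log ((af ε t n : ℝ) + 1)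
    - 2*(n:ℝ) * Real.log (n.choose 2 : ℝ)

private noncomputable def hif (ε : ℝ) (t : ℕ → ℕ) (n : ℕ) : ℝ :=
  ((n:ℝ) * Real.log n - n + 1 + Real.log n) + 2*(n:ℝ) * Real.log ((af ε t n : ℝ) + 2*n)
    - 2*(n:ℝ) * Real.log ((n.choose 2 : ℝ) - 2*n + 1)

set_option maxHeartbeats 2000000 in
private lemma master (ε : ℝ) (hε : 0 < ε) (t : ℕ → ℕ) (ht : ∀ n, t n ≤ 2 * n) :
    ∀ᶠ n : ℕ in atTop,
      (lof ε t n ≤ Real.log (Mf ε t n) ∧ Real.log (Mf ε t n) ≤ hif ε t n ∧ 0 < Mf ε t n) ∧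
      (1 - 6 / Real.sqrt n ≤ ((af ε t n : ℝ) + 1) / xf ε n ∧
        ((af ε t n : ℝ) + 1) / xf ε n ≤ 1 + 6 / Real.sqrt n) ∧
      (1 - 6 / Real.sqrt n ≤ ((af ε t n : ℝ) + 2*n) / xf ε n ∧
        ((af ε t n : ℝ) + 2*n) / xf ε n ≤ 1 + 6 / Real.sqrt n) ∧
      (1 - 6 / Real.sqrt n ≤ ((n.choose 2 : ℝ) - 2*n + 1) / (n.choose 2 : ℝ) ∧
        ((n.choose 2 : ℝ) - 2*n + 1) / (n.choose 2 : ℝ) ≤ 1 + 6 / Real.sqrt n) ∧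
      (0 < xf ε n ∧ (0:ℝ) < (n.choose 2 : ℝ) ∧ 12 ≤ Real.sqrt n) := by
  have h1ε : (0:ℝ) < 1 + ε := by linarith
  filter_upwards [eventually_ge_atTop 100,
    sqrt_nat_atTop.eventually_ge_atTop 12,
    sqrt_nat_atTop.eventually_ge_atTop (2*(1+ε)*Real.sqrt (Real.exp 1))] with n hn100 hs12 hsbig
  have hts : t n ≤ 2*n := ht n
  have nR : (100:ℝ) ≤ n := by exact_mod_cast hn100
  have npos : (0:ℝ) < n := by linarith
  have hu : Real.sqrt n * Real.sqrt n = (n:ℝ) := Real.mul_self_sqrt npos.le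
  have upos : (0:ℝ) < Real.sqrt n := by linarith
  have hN2 : (n.choose 2 : ℝ) = n*((n:ℝ)-1)/2 := Nat.cast_choose_two ℝ n
  have hNlb : (n:ℝ)^2/3 ≤ (n.choose 2 : ℝ) := by rw [hN2]; nlinarith
  have hNpos : (0:ℝ) < (n.choose 2 : ℝ) := lt_of_lt_of_le (by positivity) hNlb
  -- lower bound for x
  have hse : Real.sqrt (Real.exp 1 / n) = Real.sqrt (Real.exp 1) / Real.sqrt n :=
    Real.sqrt_div (Real.exp_pos 1).le n
  have he32 : (3/2:ℝ) ≤ Real.sqrt (Real.exp 1) := by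
    have h94 : ((3/2:ℝ))^2 ≤ Real.exp 1 := by
      have h := Real.exp_one_gt_d9
      norm_num at h ⊢
      linarith
    calc (3/2:ℝ) = Real.sqrt ((3/2:ℝ)^2) := (Real.sqrt_sq (by norm_num)).symm
      _ ≤ Real.sqrt (Real.exp 1) := Real.sqrt_le_sqrt h94
  have hepos : (0:ℝ) < Real.sqrt (Real.exp 1) := by linarith
  have hx_eq : Real.sqrt n * xf ε n = (1+ε) * Real.sqrt (Real.exp 1) * (n.choose 2 : ℝ) := by
    simp only [xf]; rw [hse]; field_simp
  have hx_lb : Real.sqrt n * (n:ℝ) / 2 ≤ xf ε n := by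
    rw [← mul_le_mul_iff_right₀ upos, hx_eq]
    have h1 : (3/2:ℝ) * ((n:ℝ)^2/3) ≤ Real.sqrt (Real.exp 1) * (n.choose 2 : ℝ) :=
      mul_le_mul he32 hNlb (by positivity) hepos.le
    have h2 : Real.sqrt (Real.exp 1) * (n.choose 2 : ℝ) ≤
        (1+ε) * (Real.sqrt (Real.exp 1) * (n.choose 2 : ℝ)) := by
      nlinarith [mul_pos hepos hNpos]
    have h3 : Real.sqrt n * (Real.sqrt n * (n:ℝ) / 2) = (n:ℝ)^2/2 := by
      rw [show Real.sqrt n * (Real.sqrt n * (n:ℝ) / 2) = (Real.sqrt n * Real.sqrt n) * (n:ℝ)/2 by ring, hu]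
      ring
    rw [h3]
    nlinarith
  have hxpos : 0 < xf ε n := lt_of_lt_of_le (by positivity) hx_lb
  set m := ⌊xf ε n⌋₊ with hmdef
  have hm_ub : (m:ℝ) ≤ xf ε n := Nat.floor_le hxpos.le
  have hm_lb : xf ε n - 1 < (m:ℝ) := by
    have := Nat.lt_floor_add_one (xf ε n); linarith
  have hxbig : 4*(n:ℝ)+4 ≤ xf ε n := by nlinarith [hx_lb]
  have h2nm : 2*n ≤ m := by
    have : ((2*n:ℕ):ℝ) < (m:ℝ) := by push_cast; linarith
    exact_mod_cast this.le
  have hsm : t n ≤ m := le_trans hts h2nm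
  -- m + 2n ≤ N
  have hhalf : (1+ε)*Real.sqrt (Real.exp 1 / n) ≤ 1/2 := by
    rw [hse, ← mul_div_assoc, div_le_div_iff₀ upos (by norm_num : (0:ℝ) < 2)]
    linarith
  have hxN : xf ε n ≤ (n.choose 2 : ℝ)/2 := by
    have := mul_le_mul_of_nonneg_right hhalf hNpos.le
    simpa only [xf, one_div_mul_eq_div] using (by simpa only [xf] using this :
      xf ε n ≤ 1/2 * (n.choose 2 : ℝ)).trans_eq (by ring)
  have h2nN : 2*(n:ℝ) ≤ (n.choose 2 : ℝ)/4 := by nlinarith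
  have hmN : m + 2*n ≤ n.choose 2 := by
    have : ((m + 2*n : ℕ):ℝ) ≤ ((n.choose 2 : ℕ):ℝ) := by push_cast; linarith
    exact_mod_cast this
  have hfN : 2*n ≤ n.choose 2 := by omega
  set A := af ε t n with hAdef
  have hAm : A = m - t n := by simp only [af, hAdef, hmdef]
  have hAle : A ≤ m := by omega
  have hAadd : A + 2*n = m + 2*n - t n := by omega
  have hafN : A + 2*n ≤ n.choose 2 := by omega
  have haNf : A ≤ n.choose 2 - 2*n := by omega
  have hAR : (A:ℝ) = (m:ℝ) - (t n : ℝ) := by rw [hAm, Nat.cast_sub hsm]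
  have htsR : (t n : ℝ) ≤ 2*n := by exact_mod_cast hts
  have hA_lb : xf ε n - (2*(n:ℝ)+1) ≤ (A:ℝ) := by rw [hAR]; linarith
  have hA_ub : (A:ℝ) ≤ xf ε n := by
    have htn0 : (0:ℝ) ≤ (t n : ℝ) := by positivity
    rw [hAR]; linarith
  -- ratio bounds (computed early, before heavy factorial facts enter context)
  have hsn12 : Real.sqrt n ≤ (n:ℝ)/12 := by
    have h12 := mul_le_mul_of_nonneg_right hs12 upos.le
    rw [hu] at h12
    linarith
  have h6x : 2*(n:ℝ)+1 ≤ 6/Real.sqrt n * xf ε n := by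
    rw [div_mul_eq_mul_div, le_div_iff₀ upos]
    have hp2 : (0:ℝ) ≤ ((n:ℝ)-1) * Real.sqrt n := mul_nonneg (by linarith) upos.le
    nlinarith [hx_lb, hp2]
  have h6N : 2*(n:ℝ)+1 ≤ 6/Real.sqrt n * (n.choose 2 : ℝ) := by
    rw [div_mul_eq_mul_div, le_div_iff₀ upos]
    have hp : (0:ℝ) ≤ (2*(n:ℝ)+1) * ((n:ℝ)/12 - Real.sqrt n) :=
      mul_nonneg (by positivity) (by linarith)
    nlinarith [hp, hNlb, nR]
  have b1 : 1 - 6 / Real.sqrt n ≤ ((A : ℝ) + 1) / xf ε n := by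
    rw [le_div_iff₀ hxpos]
    have he : (1 - 6/Real.sqrt n) * xf ε n = xf ε n - 6/Real.sqrt n * xf ε n := by ring
    rw [he]; linarith [h6x, hA_lb]
  have b2 : ((A : ℝ) + 1) / xf ε n ≤ 1 + 6 / Real.sqrt n := by
    rw [div_le_iff₀ hxpos]
    have he : (1 + 6/Real.sqrt n) * xf ε n = xf ε n + 6/Real.sqrt n * xf ε n := by ring
    rw [he]; linarith [h6x, hA_ub]
  have b3 : 1 - 6 / Real.sqrt n ≤ ((A : ℝ) + 2*n) / xf ε n := by
    rw [le_div_iff₀ hxpos]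
    have he : (1 - 6/Real.sqrt n) * xf ε n = xf ε n - 6/Real.sqrt n * xf ε n := by ring
    rw [he]; linarith [h6x, hA_lb]
  have b4 : ((A : ℝ) + 2*n) / xf ε n ≤ 1 + 6 / Real.sqrt n := by
    rw [div_le_iff₀ hxpos]
    have he : (1 + 6/Real.sqrt n) * xf ε n = xf ε n + 6/Real.sqrt n * xf ε n := by ring
    rw [he]; linarith [h6x, hA_ub]
  have b5 : 1 - 6 / Real.sqrt n ≤ ((n.choose 2 : ℝ) - 2*n + 1) / (n.choose 2 : ℝ) := by
    rw [le_div_iff₀ hNpos]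
    have he : (1 - 6/Real.sqrt n) * (n.choose 2 : ℝ)
        = (n.choose 2 : ℝ) - 6/Real.sqrt n * (n.choose 2 : ℝ) := by ring
    rw [he]; linarith [h6N]
  have b6 : ((n.choose 2 : ℝ) - 2*n + 1) / (n.choose 2 : ℝ) ≤ 1 + 6 / Real.sqrt n := by
    rw [div_le_iff₀ hNpos]
    have he : (1 + 6/Real.sqrt n) * (n.choose 2 : ℝ)
        = (n.choose 2 : ℝ) + 6/Real.sqrt n * (n.choose 2 : ℝ) := by ring
    rw [he]; linarith [h6N]
  -- the value of Mf
  have hM1 : Mf ε t n = (n.factorial:ℝ) * (((n.choose 2 - 2*n).choose A : ℕ):ℝ)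
      / (((n.choose 2).choose (A + 2*n) : ℕ):ℝ) := by
    rw [hAadd]
    simp only [Mf, af, hAdef, hmdef, xf]
  have hfacA : (((n.choose 2 - 2*n).choose A : ℕ):ℝ) =
      ((n.choose 2 - 2*n).factorial : ℝ) / ((A.factorial : ℝ) *
        ((n.choose 2 - 2*n - A).factorial : ℝ)) := Nat.cast_choose ℝ haNf
  have hfacB : (((n.choose 2).choose (A + 2*n) : ℕ):ℝ) =
      ((n.choose 2).factorial : ℝ) / (((A + 2*n).factorial : ℝ) *
        ((n.choose 2 - (A + 2*n)).factorial : ℝ)) := Nat.cast_choose ℝ hafN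
  have hsub2 : n.choose 2 - 2*n - A = n.choose 2 - (A + 2*n) := by omega
  have fne : ∀ k : ℕ, ((k.factorial : ℕ):ℝ) ≠ 0 :=
    fun k => Nat.cast_ne_zero.2 (Nat.factorial_ne_zero k)
  have fnn : ∀ k : ℕ, (0:ℝ) ≤ ((k.factorial : ℕ):ℝ) := fun k => by positivity
  have hMval : Mf ε t n = (n.factorial:ℝ) * (((A + 2*n).factorial : ℝ) *
      ((n.choose 2 - 2*n).factorial : ℝ)) / ((A.factorial : ℝ) * ((n.choose 2).factorial : ℝ)) := by
    rw [hM1, hfacA, hfacB, hsub2]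
    field_simp
  -- factorial ratio bounds, cast to ℝ
  have r1 : (A.factorial : ℝ) * ((A:ℝ)+1)^(2*n) ≤ ((A + 2*n).factorial : ℝ) := by
    exact_mod_cast aux_asc_lb A (2*n)
  have r3 : ((A + 2*n).factorial : ℝ) ≤ (A.factorial : ℝ) * ((A:ℝ)+2*n)^(2*n) := by
    exact_mod_cast aux_asc_ub A (2*n)
  have c2nat := aux_asc_lb (n.choose 2 - 2*n) (2*n)
  have c4nat := aux_asc_ub (n.choose 2 - 2*n) (2*n)
  rw [Nat.sub_add_cancel hfN] at c2nat c4nat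
  have hKR : ((n.choose 2 - 2*n : ℕ):ℝ) = (n.choose 2 : ℝ) - 2*n := by
    push_cast [Nat.cast_sub hfN]; ring
  have r2 : ((n.choose 2 - 2*n).factorial : ℝ) * ((n.choose 2 : ℝ) - 2*n + 1)^(2*n) ≤
      ((n.choose 2).factorial : ℝ) := by
    have := (Nat.cast_le (α := ℝ)).2 c2nat
    push_cast at this
    rw [hKR] at this
    convert this using 3 <;> push_cast [Nat.cast_sub hfN] <;> ring
  have r4 : ((n.choose 2).factorial : ℝ) ≤
      ((n.choose 2 - 2*n).factorial : ℝ) * ((n.choose 2 : ℝ))^(2*n) := by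
    have := (Nat.cast_le (α := ℝ)).2 c4nat
    push_cast at this
    exact this
  have hApos : (0:ℝ) < (A:ℝ)+1 := by positivity
  have hvpos : (0:ℝ) < (n.choose 2 : ℝ) - 2*n + 1 := by
    have : (2*(n:ℝ)) ≤ (n.choose 2 : ℝ) := by exact_mod_cast hfN
    linarith
  -- lower bound for Mf
  have hLpos : (0:ℝ) < (n.factorial:ℝ) * ((A:ℝ)+1)^(2*n) / ((n.choose 2 : ℝ))^(2*n) := by
    positivity
  have hLb : (n.factorial:ℝ) * ((A:ℝ)+1)^(2*n) / ((n.choose 2 : ℝ))^(2*n) ≤ Mf ε t n := by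
    rw [hMval, div_le_div_iff₀ (by positivity) (by positivity)]
    calc (n.factorial:ℝ) * ((A:ℝ)+1)^(2*n) * ((A.factorial : ℝ) * ((n.choose 2).factorial : ℝ))
        = (n.factorial:ℝ) * (((A.factorial : ℝ) * ((A:ℝ)+1)^(2*n)) *
            ((n.choose 2).factorial : ℝ)) := by ring
      _ ≤ (n.factorial:ℝ) * (((A + 2*n).factorial : ℝ) *
            (((n.choose 2 - 2*n).factorial : ℝ) * ((n.choose 2 : ℝ))^(2*n))) := by
          apply mul_le_mul_of_nonneg_left _ (by positivity)
          exact mul_le_mul r1 r4 (fnn _) (fnn _)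
      _ = (n.factorial:ℝ) * (((A + 2*n).factorial : ℝ) * ((n.choose 2 - 2*n).factorial : ℝ)) *
            ((n.choose 2 : ℝ))^(2*n) := by ring
  have hMpos : 0 < Mf ε t n := lt_of_lt_of_le hLpos hLb
  -- upper bound for Mf
  have hUb : Mf ε t n ≤ (n.factorial:ℝ) * ((A:ℝ)+2*n)^(2*n)
      / ((n.choose 2 : ℝ) - 2*n + 1)^(2*n) := by
    rw [hMval, div_le_div_iff₀ (by positivity) (by positivity)]
    calc (n.factorial:ℝ) * (((A + 2*n).factorial : ℝ) * ((n.choose 2 - 2*n).factorial : ℝ)) *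
          ((n.choose 2 : ℝ) - 2*n + 1)^(2*n)
        = (n.factorial:ℝ) * (((A + 2*n).factorial : ℝ) *
            (((n.choose 2 - 2*n).factorial : ℝ) * ((n.choose 2 : ℝ) - 2*n + 1)^(2*n))) := by ring
      _ ≤ (n.factorial:ℝ) * (((A.factorial : ℝ) * ((A:ℝ)+2*n)^(2*n)) *
            ((n.choose 2).factorial : ℝ)) := by
          apply mul_le_mul_of_nonneg_left _ (by positivity)
          exact mul_le_mul r3 r2 (by positivity) (by positivity)
      _ = (n.factorial:ℝ) * ((A:ℝ)+2*n)^(2*n) * ((A.factorial : ℝ) *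
            ((n.choose 2).factorial : ℝ)) := by ring
  -- log bounds
  have hn1 : 1 ≤ n := by omega
  have hloglb : lof ε t n ≤ Real.log (Mf ε t n) := by
    have h1 : Real.log ((n.factorial:ℝ) * ((A:ℝ)+1)^(2*n) / ((n.choose 2 : ℝ))^(2*n)) ≤
        Real.log (Mf ε t n) := Real.log_le_log hLpos hLb
    rw [Real.log_div (by positivity) (by positivity),
      Real.log_mul (fne n) (by positivity), Real.log_pow, Real.log_pow] at h1
    have h2 := aux_fact_lb n
    simp only [lof]
    push_cast at h1 ⊢
    linarith
  have hlogub : Real.log (Mf ε t n) ≤ hif ε t n := by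
    have hA2pos : (0:ℝ) < (A:ℝ)+2*n := by positivity
    have h1 : Real.log (Mf ε t n) ≤
        Real.log ((n.factorial:ℝ) * ((A:ℝ)+2*n)^(2*n) / ((n.choose 2 : ℝ) - 2*n + 1)^(2*n)) :=
      Real.log_le_log hMpos hUb
    rw [Real.log_div (by positivity) (by positivity),
      Real.log_mul (fne n) (by positivity), Real.log_pow, Real.log_pow] at h1
    have h2 := aux_fact_ub n hn1
    simp only [hif]
    push_cast at h1 ⊢
    linarith
  exact ⟨⟨hloglb, hlogub, hMpos⟩, ⟨b1, b2⟩, ⟨b3, b4⟩, ⟨b5, b6⟩, hxpos, hNpos, hs12⟩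

/-- With `N = C(n,2)`, `f = 2n`, `m = ⌊(1+ε)√(e/n) N⌋` and any `t = t(n) ∈ {0,…,f}`, the
quantity `M = n! C(N-f, m-t)/C(N, m+f-t)` satisfies `M = (1+ε)^{(2-o(1))n}`, i.e.
`log M / (n log(1+ε)) → 2`; in particular `M → ∞`. -/
theorem expected_copies_superexponential (ε : ℝ) (hε : 0 < ε)
    (t : ℕ → ℕ) (ht : ∀ n, t n ≤ 2 * n) :
    let M : ℕ → ℝ := fun n =>
      (n.factorial : ℝ) *
        (((n.choose 2 - 2 * n).choose
          (⌊(1 + ε) * Real.sqrt (Real.exp 1 / n) * (n.choose 2 : ℝ)⌋₊ - t n) : ℕ) : ℝ) /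
        (((n.choose 2).choose
          (⌊(1 + ε) * Real.sqrt (Real.exp 1 / n) * (n.choose 2 : ℝ)⌋₊ + 2 * n - t n) : ℕ) : ℝ);
    Tendsto (fun n : ℕ => Real.log (M n) / ((n : ℝ) * Real.log (1 + ε)))
        atTop (nhds 2) ∧
      Tendsto M atTop atTop := by
  intro M
  have hL : (0:ℝ) < Real.log (1 + ε) := Real.log_pos (by linarith)
  have hmaster := master ε hε t ht
  -- limits of the squeeze functions
  have h6 : Tendsto (fun n : ℕ => 6 / Real.sqrt n) atTop (nhds 0) :=
    Tendsto.const_div_atTop sqrt_nat_atTop 6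
  have hglim : Tendsto (fun n : ℕ => 1 - 6 / Real.sqrt n) atTop (nhds 1) := by
    simpa using tendsto_const_nhds.sub h6
  have hhlim : Tendsto (fun n : ℕ => 1 + 6 / Real.sqrt n) atTop (nhds 1) := by
    simpa using tendsto_const_nhds.add h6
  -- ratio limits
  have hr1 : Tendsto (fun n : ℕ => ((af ε t n : ℝ) + 1) / xf ε n) atTop (nhds 1) :=
    tendsto_of_tendsto_of_tendsto_of_le_of_le' hglim hhlim
      (hmaster.mono fun n h => h.2.1.1) (hmaster.mono fun n h => h.2.1.2)
  have hr2 : Tendsto (fun n : ℕ => ((af ε t n : ℝ) + 2*n) / xf ε n) atTop (nhds 1) :=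
    tendsto_of_tendsto_of_tendsto_of_le_of_le' hglim hhlim
      (hmaster.mono fun n h => h.2.2.1.1) (hmaster.mono fun n h => h.2.2.1.2)
  have hr3 : Tendsto (fun n : ℕ => ((n.choose 2 : ℝ) - 2*n + 1) / (n.choose 2 : ℝ))
      atTop (nhds 1) :=
    tendsto_of_tendsto_of_tendsto_of_le_of_le' hglim hhlim
      (hmaster.mono fun n h => h.2.2.2.1.1) (hmaster.mono fun n h => h.2.2.2.1.2)
  have hlog1 : Tendsto (fun n : ℕ => Real.log (((af ε t n : ℝ) + 1) / xf ε n)) atTop (nhds 0) := by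
    have := ((Real.continuousAt_log one_ne_zero).tendsto).comp hr1
    simpa [Function.comp_def] using this
  have hlog2 : Tendsto (fun n : ℕ => Real.log (((af ε t n : ℝ) + 2*n) / xf ε n)) atTop (nhds 0) := by
    have := ((Real.continuousAt_log one_ne_zero).tendsto).comp hr2
    simpa [Function.comp_def] using this
  have hlog3 : Tendsto (fun n : ℕ =>
      Real.log (((n.choose 2 : ℝ) - 2*n + 1) / (n.choose 2 : ℝ))) atTop (nhds 0) := by
    have := ((Real.continuousAt_log one_ne_zero).tendsto).comp hr3
    simpa [Function.comp_def] using this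
  have hlogn : Tendsto (fun n : ℕ => (1 + Real.log n) / n) atTop (nhds 0) := by
    have ha : Tendsto (fun n : ℕ => (1:ℝ) / n) atTop (nhds 0) :=
      tendsto_one_div_atTop_nhds_zero_nat
    have hb : Tendsto (fun n : ℕ => Real.log n / n) atTop (nhds 0) := by
      have := (Real.isLittleO_log_id_atTop.tendsto_div_nhds_zero).comp
        (tendsto_natCast_atTop_atTop (R := ℝ))
      simpa [Function.comp_def] using this
    have := ha.add hb
    simp only [add_zero] at this
    apply this.congr
    intro n
    rw [add_div]
  -- identity rewriting for lof and hif
  have hloid : ∀ᶠ n : ℕ in atTop,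
      lof ε t n / ((n:ℝ) * Real.log (1+ε)) =
        (2 * Real.log (1+ε) + 2 * Real.log (((af ε t n : ℝ) + 1) / xf ε n)) / Real.log (1+ε) := by
    filter_upwards [hmaster, eventually_ge_atTop 1] with n hm hn1
    have hnpos : (0:ℝ) < n := by exact_mod_cast hn1
    have hx : 0 < xf ε n := hm.2.2.2.2.1
    have hN : (0:ℝ) < (n.choose 2 : ℝ) := hm.2.2.2.2.2.1
    have hsq : (0:ℝ) < Real.sqrt (Real.exp 1 / n) :=
      Real.sqrt_pos.2 (div_pos (Real.exp_pos 1) hnpos)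
    have h1ε : (0:ℝ) < 1 + ε := by linarith
    have hA1 : (0:ℝ) < (af ε t n : ℝ) + 1 := by positivity
    have hxlog : Real.log (xf ε n) =
        Real.log (1+ε) + (1 - Real.log n)/2 + Real.log ((n.choose 2 : ℝ)) := by
      simp only [xf]
      rw [Real.log_mul (by positivity) hN.ne', Real.log_mul h1ε.ne' hsq.ne',
        Real.log_sqrt (div_nonneg (Real.exp_pos 1).le hnpos.le),
        Real.log_div (Real.exp_pos 1).ne' hnpos.ne', Real.log_exp]
    rw [Real.log_div hA1.ne' hx.ne', hxlog]
    simp only [lof]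
    field_simp
    ring
  have hhiid : ∀ᶠ n : ℕ in atTop,
      hif ε t n / ((n:ℝ) * Real.log (1+ε)) =
        (2 * Real.log (1+ε) + (1 + Real.log n) / n
          + 2 * Real.log (((af ε t n : ℝ) + 2*n) / xf ε n)
          - 2 * Real.log (((n.choose 2 : ℝ) - 2*n + 1) / (n.choose 2 : ℝ))) / Real.log (1+ε) := by
    filter_upwards [hmaster, eventually_ge_atTop 1] with n hm hn1
    have hnpos : (0:ℝ) < n := by exact_mod_cast hn1
    have hx : 0 < xf ε n := hm.2.2.2.2.1
    have hN : (0:ℝ) < (n.choose 2 : ℝ) := hm.2.2.2.2.2.1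
    have hs12 : (12:ℝ) ≤ Real.sqrt n := hm.2.2.2.2.2.2
    have hsq : (0:ℝ) < Real.sqrt (Real.exp 1 / n) :=
      Real.sqrt_pos.2 (div_pos (Real.exp_pos 1) hnpos)
    have h1ε : (0:ℝ) < 1 + ε := by linarith
    have hA2 : (0:ℝ) < (af ε t n : ℝ) + 2*n := by positivity
    have hvpos : (0:ℝ) < (n.choose 2 : ℝ) - 2*n + 1 := by
      have hlow := hm.2.2.2.1.1
      have h6 : 6 / Real.sqrt n ≤ 1/2 := by
        rw [div_le_div_iff₀ (by linarith) (by norm_num)]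
        linarith
      have hratpos : (0:ℝ) < ((n.choose 2 : ℝ) - 2*n + 1) / (n.choose 2 : ℝ) := by
        linarith
      have := mul_pos hratpos hN
      rwa [div_mul_cancel₀ _ hN.ne'] at this
    have hxlog : Real.log (xf ε n) =
        Real.log (1+ε) + (1 - Real.log n)/2 + Real.log ((n.choose 2 : ℝ)) := by
      simp only [xf]
      rw [Real.log_mul (by positivity) hN.ne', Real.log_mul h1ε.ne' hsq.ne',
        Real.log_sqrt (div_nonneg (Real.exp_pos 1).le hnpos.le),
        Real.log_div (Real.exp_pos 1).ne' hnpos.ne', Real.log_exp]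
    rw [Real.log_div hA2.ne' hx.ne', Real.log_div hvpos.ne' hN.ne', hxlog]
    simp only [hif]
    field_simp
    ring
  have hlolim : Tendsto (fun n : ℕ => lof ε t n / ((n:ℝ) * Real.log (1+ε))) atTop (nhds 2) := by
    apply Tendsto.congr' (hloid.mono fun n h => h.symm)
    have : Tendsto (fun n : ℕ =>
        (2 * Real.log (1+ε) + 2 * Real.log (((af ε t n : ℝ) + 1) / xf ε n)) / Real.log (1+ε))
        atTop (nhds ((2 * Real.log (1+ε) + 2 * 0) / Real.log (1+ε))) :=
      (tendsto_const_nhds.add (hlog1.const_mul 2)).div_const _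
    convert this using 2
    field_simp
    ring
  have hhilim : Tendsto (fun n : ℕ => hif ε t n / ((n:ℝ) * Real.log (1+ε))) atTop (nhds 2) := by
    apply Tendsto.congr' (hhiid.mono fun n h => h.symm)
    have : Tendsto (fun n : ℕ =>
        (2 * Real.log (1+ε) + (1 + Real.log n) / n
          + 2 * Real.log (((af ε t n : ℝ) + 2*n) / xf ε n)
          - 2 * Real.log (((n.choose 2 : ℝ) - 2*n + 1) / (n.choose 2 : ℝ))) / Real.log (1+ε))
        atTop (nhds ((2 * Real.log (1+ε) + 0 + 2 * 0 - 2 * 0) / Real.log (1+ε))) :=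
      (((tendsto_const_nhds.add hlogn).add (hlog2.const_mul 2)).sub (hlog3.const_mul 2)).div_const _
    convert this using 2
    field_simp
    ring
  have hMf : ∀ n, M n = Mf ε t n := fun n => rfl
  have part1 : Tendsto (fun n : ℕ => Real.log (M n) / ((n : ℝ) * Real.log (1 + ε)))
      atTop (nhds 2) := by
    apply tendsto_of_tendsto_of_tendsto_of_le_of_le' hlolim hhilim
    · filter_upwards [hmaster, eventually_ge_atTop 1] with n h hn1
      rw [hMf]
      have hnL : (0:ℝ) < (n:ℝ) * Real.log (1+ε) := by
        have : (0:ℝ) < (n:ℝ) := by exact_mod_cast hn1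
        positivity
      exact div_le_div_of_nonneg_right h.1.1 hnL.le
    · filter_upwards [hmaster, eventually_ge_atTop 1] with n h hn1
      rw [hMf]
      have hnL : (0:ℝ) < (n:ℝ) * Real.log (1+ε) := by
        have : (0:ℝ) < (n:ℝ) := by exact_mod_cast hn1
        positivity
      exact div_le_div_of_nonneg_right h.1.2.1 hnL.le
  refine ⟨part1, ?_⟩
  -- part 2 : M → atTop
  have hlo_top : Tendsto (fun n : ℕ => lof ε t n) atTop atTop := by
    have hev : ∀ᶠ n : ℕ in atTop, (n:ℝ) * Real.log (1+ε) ≤ lof ε t n := by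
      filter_upwards [hlolim.eventually (eventually_gt_nhds (show (1:ℝ) < 2 by norm_num)),
        eventually_ge_atTop 1] with n h hn1
      have hnL : (0:ℝ) < (n:ℝ) * Real.log (1+ε) := by
        have : (0:ℝ) < (n:ℝ) := by exact_mod_cast hn1
        positivity
      have h2 := (one_lt_div hnL).mp h
      linarith
    apply tendsto_atTop_mono' _ hev
    exact (tendsto_natCast_atTop_atTop).atTop_mul_const hL
  have hexp : Tendsto (fun n : ℕ => Real.exp (lof ε t n)) atTop atTop :=
    Real.tendsto_exp_atTop.comp hlo_top
  apply tendsto_atTop_mono' _ _ hexp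
  filter_upwards [hmaster] with n h
  rw [hMf]
  calc Real.exp (lof ε t n) ≤ Real.exp (Real.log (Mf ε t n)) := Real.exp_le_exp.2 h.1.1
    _ = Mf ε t n := Real.exp_log h.1.2.2
end
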